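/- arXiv:1904.05850 — 4 statements merged into one kernel-verified Lean document; each statement's English description precedes it below -/
import Mathlib

section
/- (Stein–Chen Poisson approximation.) Let J be a finite index set and for each j ∈ J let 1_j be a Bernoulli random variable with p_j = P(1_j = 1) ∈ (0,1). Let W = Σ_{j∈J} 1_j and let Z be a Poisson random variable with mean E[Z] = E[W] = λ. For each j choose a neighborhood B_j ⊂ J containing j. Then d_TV(L(W), L(Z)) ≤ 2(b_1 + b_2 + b_3), where b_1 = Σ_{j∈J} Σ_{k∈B_j} p_j p_k, b_2 = Σ_{j∈J} Σ_{k∈B_j\{j}} P(1_j = 1_k = 1), and b_3 = Σ_{j∈J} E| E[1_j − p_j | σ(1_k : k ∈ J \ B_j)] |. -/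
open MeasureTheory ProbabilityTheory Set
open scoped ENNReal NNReal Nat

noncomputable section



private lemma nat_choose_mono_half {N j m : ℕ} (hj : j ≤ m) (hm : 2 * m ≤ N) :
    N.choose j ≤ N.choose m := by
  induction m with
  | zero => simp_all
  | succ m ih =>
    rcases Nat.lt_or_ge j (m+1) with h | h
    · have hj' : j ≤ m := Nat.lt_succ_iff.mp h
      refine (ih hj' (by omega)).trans ?_
      exact Nat.choose_le_succ_of_lt_half_left (by omega)
    · have : j = m + 1 := le_antisymm hj h
      simp [this]

private lemma nat_key_aux {n m : ℕ} (hmn : m ≤ n) :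
    (∑ j ∈ Finset.range (m + 1), (n + m + 1).choose j) * (n ! * m !) ≤ (n + m + 1)! := by
  set N := n + m + 1 with hN
  have h1 : ∑ j ∈ Finset.range (m + 1), N.choose j ≤ (m + 1) * N.choose m := by
    calc ∑ j ∈ Finset.range (m + 1), N.choose j
        ≤ ∑ _j ∈ Finset.range (m + 1), N.choose m := by
          refine Finset.sum_le_sum fun j hj => ?_
          exact nat_choose_mono_half (Nat.lt_succ_iff.mp (Finset.mem_range.mp hj)) (by omega)
      _ = (m + 1) * N.choose m := by simp [mul_comm]
  have h2 : N.choose m * m ! * (n + 1)! = N ! := by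
    have := Nat.choose_mul_factorial_mul_factorial (show m ≤ N by omega)
    have hNm : N - m = n + 1 := by omega
    rwa [hNm] at this
  calc (∑ j ∈ Finset.range (m + 1), N.choose j) * (n ! * m !)
      ≤ (m + 1) * N.choose m * (n ! * m !) := Nat.mul_le_mul_right _ h1
    _ ≤ (n + 1) * N.choose m * (n ! * m !) := by
        exact Nat.mul_le_mul_right _ (Nat.mul_le_mul_right _ (by omega))
    _ = N.choose m * m ! * ((n + 1) * n !) := by ring
    _ = N.choose m * m ! * (n + 1)! := by rw [Nat.factorial_succ]
    _ = N ! := h2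

private lemma nat_key (n m : ℕ) :
    (∑ j ∈ Finset.range (min n m + 1), (n + m + 1).choose j) * (n ! * m !) ≤ (n + m + 1)! := by
  rcases le_total m n with h | h
  · rw [min_eq_right h]; exact nat_key_aux h
  · rw [min_eq_left h]
    have := nat_key_aux (n := m) (m := n) h
    rw [show m + n + 1 = n + m + 1 by ring] at this
    rwa [mul_comm (m !) (n !)] at this

private lemma series_key (x : ℝ) (hx : 0 ≤ x) (n : ℕ) :
    (∑ j ∈ Finset.range (n + 1), x ^ j / j !) * (∑' m : ℕ, x ^ (m + n + 1) / (m + n + 1)!)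
      ≤ x ^ (n + 1) / n ! * Real.exp x := by
  classical
  set a : ℕ → ℝ := fun j => if j ≤ n then x ^ j / j ! else 0 with ha
  set b : ℕ → ℝ := fun k => if n + 1 ≤ k then x ^ k / k ! else 0 with hb
  have hsum : Summable fun k : ℕ => x ^ k / (k ! : ℝ) := Real.summable_pow_div_factorial x
  have hterm_nonneg : ∀ k : ℕ, 0 ≤ x ^ k / (k ! : ℝ) := fun k => by positivity
  have ha_nonneg : ∀ k, 0 ≤ a k := fun k => by by_cases h : k ≤ n <;> simp [ha, h, hterm_nonneg k]
  have hb_nonneg : ∀ k, 0 ≤ b k := fun k => by by_cases h : n < k <;> simp [hb, h, hterm_nonneg k]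
  have ha_le : ∀ k, a k ≤ x ^ k / k ! := fun k => by
    by_cases h : k ≤ n <;> simp [ha, h, hterm_nonneg k]
  have hb_le : ∀ k, b k ≤ x ^ k / k ! := fun k => by
    by_cases h : n < k <;> simp [hb, h, hterm_nonneg k]
  have haS : Summable a := hsum.of_nonneg_of_le ha_nonneg ha_le
  have hbS : Summable b := hsum.of_nonneg_of_le hb_nonneg hb_le
  have haN : Summable fun k => ‖a k‖ := by
    simpa [Real.norm_eq_abs, abs_of_nonneg (ha_nonneg _)] using haS
  have hbN : Summable fun k => ‖b k‖ := by
    simpa [Real.norm_eq_abs, abs_of_nonneg (hb_nonneg _)] using hbS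
  -- identify the two factors with tsums of a and b
  have hS1 : (∑ j ∈ Finset.range (n + 1), x ^ j / j !) = ∑' j, a j := by
    rw [tsum_eq_sum (s := Finset.range (n + 1)) (fun k hk => by
      simp only [Finset.mem_range, not_lt] at hk
      simp [ha, Nat.lt_of_succ_le, show ¬ k ≤ n by omega])]
    refine Finset.sum_congr rfl fun j hj => ?_
    simp only [Finset.mem_range] at hj
    simp [ha, show j ≤ n by omega]
  have hS2 : (∑' m : ℕ, x ^ (m + n + 1) / (m + n + 1)!) = ∑' k, b k := by
    have := Summable.sum_add_tsum_nat_add (f := b) (n + 1) hbS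
    have hz : ∑ i ∈ Finset.range (n + 1), b i = 0 := by
      refine Finset.sum_eq_zero fun i hi => ?_
      simp only [Finset.mem_range] at hi
      simp [hb, show ¬ n < i by omega]
    rw [hz, zero_add] at this
    rw [← this]
    refine tsum_congr fun m => ?_
    simp [hb, show n + 1 ≤ m + (n + 1) by omega, show m + (n + 1) = m + n + 1 by ring]
  -- Cauchy product
  rw [hS1, hS2, tsum_mul_tsum_eq_tsum_sum_antidiagonal_of_summable_norm haN hbN]
  -- RHS as a tsum
  have hexp : Real.exp x = ∑' m : ℕ, x ^ m / m ! := by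
    rw [Real.exp_eq_exp_ℝ, NormedSpace.exp_eq_tsum_div]
  have hRHS : x ^ (n + 1) / n ! * Real.exp x
      = ∑' m : ℕ, x ^ (n + 1) / n ! * (x ^ m / m !) := by
    rw [hexp, tsum_mul_left]
  rw [hRHS]
  -- diagonal sums
  set diag : ℕ → ℝ := fun t => ∑ kl ∈ Finset.HasAntidiagonal.antidiagonal t, a kl.1 * b kl.2 with hdiag
  have hdiagS : Summable diag :=
    summable_sum_mul_antidiagonal_of_summable_norm' haN haS hbN hbS
  have hdiag_zero : ∀ t ∈ Finset.range (n + 1), diag t = 0 := by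
    intro t ht
    simp only [Finset.mem_range] at ht
    refine Finset.sum_eq_zero fun kl hkl => ?_
    rw [Finset.HasAntidiagonal.mem_antidiagonal] at hkl
    have : ¬ n < kl.2 := by omega
    simp [hb, this]
  have hshift : (∑' t, diag t) = ∑' m, diag (m + (n + 1)) := by
    have := Summable.sum_add_tsum_nat_add (f := diag) (n + 1) hdiagS
    rw [Finset.sum_eq_zero hdiag_zero, zero_add] at this
    exact this.symm
  rw [hshift]
  -- termwise comparison
  refine Summable.tsum_le_tsum (fun m => ?_) ?_ ?_
  · -- diag (m + (n+1)) ≤ x^(n+1)/n! * (x^m/m!)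
    set N := m + (n + 1) with hNdef
    have hdiag_eq : diag N = ∑ j ∈ Finset.range (N + 1), a j * b (N - j) := by
      rw [hdiag]
      exact Finset.Nat.sum_antidiagonal_eq_sum_range_succ_mk _ N
    rw [hdiag_eq]
    have hterm : ∀ j ∈ Finset.range (N + 1),
        a j * b (N - j) = if j ≤ min n m then x ^ N * ((n+m+1).choose j) / (n+m+1)! else 0 := by
      intro j hj
      simp only [Finset.mem_range] at hj
      by_cases h1 : j ≤ n
      · by_cases h2 : j ≤ m
        · have hk : n + 1 ≤ N - j := by omega
          have hNj : j ≤ N := by omega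
          have : a j * b (N - j) = x ^ j / j ! * (x ^ (N - j) / (N - j)!) := by
            simp [ha, hb, h1, show n < N - j by omega]
          rw [this, if_pos (le_min h1 h2)]
          clear this
          have hpow : x ^ j * x ^ (N - j) = x ^ N := by
            rw [← pow_add]; congr 1; omega
          have hchoose : ((n+m+1).choose j : ℝ) * (j ! * (N - j)!) = ((n+m+1)! : ℝ) := by
            have hNe : n + m + 1 = N := by omega
            have := Nat.choose_mul_factorial_mul_factorial (show j ≤ n + m + 1 by omega)
            have h3 : n + m + 1 - j = N - j := by omega
            rw [h3] at this
            calc ((n+m+1).choose j : ℝ) * (j ! * (N - j)!)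
                = (((n+m+1).choose j * j ! * (N - j)! : ℕ) : ℝ) := by push_cast; ring
              _ = ((n+m+1)! : ℝ) := by rw [this]
          have hjne : (j ! : ℝ) ≠ 0 := Nat.cast_ne_zero.mpr (Nat.factorial_ne_zero j)
          have hNjne : ((N - j)! : ℝ) ≠ 0 := Nat.cast_ne_zero.mpr (Nat.factorial_ne_zero _)
          have hNfne : ((n+m+1)! : ℝ) ≠ 0 := Nat.cast_ne_zero.mpr (Nat.factorial_ne_zero _)
          rw [div_mul_div_comm, hpow, div_eq_div_iff (mul_ne_zero hjne hNjne) hNfne]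
          linear_combination (-(x ^ N)) * hchoose
        · have hk : ¬ n + 1 ≤ N - j := by omega
          rw [if_neg (by omega : ¬ j ≤ min n m)]
          simp [hb, show ¬ n < N - j by omega]
      · rw [if_neg (by omega : ¬ j ≤ min n m)]
        simp [ha, h1]
    rw [Finset.sum_congr rfl hterm]
    rw [← Finset.sum_filter]
    have hfilter : Finset.filter (fun j => j ≤ min n m) (Finset.range (N + 1))
        = Finset.range (min n m + 1) := by
      ext j
      simp only [Finset.mem_filter, Finset.mem_range]
      omega
    rw [hfilter, ← Finset.sum_div, ← Finset.mul_sum]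
    -- now: x^N * (Σ choose) / (n+m+1)! ≤ x^(n+1)/n! * (x^m/m!)
    have hkey := nat_key n m
    have hrhs : x ^ (n + 1) / n ! * (x ^ m / m !) = x ^ N / ((n ! : ℝ) * m !) := by
      rw [div_mul_div_comm, ← pow_add]
      congr 2
      omega
    rw [hrhs]
    rw [div_le_div_iff₀ (by positivity) (by positivity)]
    have hxN : 0 ≤ x ^ N := by positivity
    calc x ^ N * (∑ j ∈ Finset.range (min n m + 1), ((n+m+1).choose j : ℝ)) * ((n ! : ℝ) * m !)
        = x ^ N * (((∑ j ∈ Finset.range (min n m + 1), (n+m+1).choose j) * (n ! * m !) : ℕ) : ℝ) := by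
          push_cast; ring
      _ ≤ x ^ N * (((n+m+1)! : ℕ) : ℝ) := by
          refine mul_le_mul_of_nonneg_left ?_ hxN
          exact_mod_cast hkey
      _ = x ^ N * ((n+m+1)! : ℝ) := by norm_num
  · exact (summable_nat_add_iff (n + 1)).mpr hdiagS
  · exact (hsum.mul_left _)



/-- Stein solution for the Poisson approximation. -/
private def steinF (r : ℝ≥0) (A : Set ℕ) : ℕ → ℝ
  | 0 => 0
  | n + 1 => (n ! : ℝ) / (r : ℝ) ^ (n + 1) * Real.exp r *
      (((poissonMeasure r) (A ∩ Set.Iio (n + 1))).toReal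
        - ((poissonMeasure r) A).toReal * ((poissonMeasure r) (Set.Iio (n + 1))).toReal)

private lemma pois_real_singleton (r : ℝ≥0) (n : ℕ) :
    ((poissonMeasure r) {n}).toReal = poissonPMFReal r n := by
  rw [← measureReal_def, poissonMeasure_real_singleton]; rfl

private lemma pois_step (r : ℝ≥0) (A : Set ℕ) (n : ℕ) :
    ((poissonMeasure r) (A ∩ Set.Iio (n + 1))).toReal
      = ((poissonMeasure r) (A ∩ Set.Iio n)).toReal
        + Set.indicator A (fun _ => poissonPMFReal r n) n := by
  classical
  have hsplit : A ∩ Set.Iio (n + 1) = (A ∩ Set.Iio n) ∪ (A ∩ {n}) := by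
    ext k
    by_cases hk : k ∈ A <;>
      simp [hk, Set.mem_Iio, Nat.lt_succ_iff_lt_or_eq, Nat.le_iff_lt_or_eq]
  have hdisj : Disjoint (A ∩ Set.Iio n) (A ∩ {n}) := by
    refine Set.disjoint_left.mpr fun k hk1 hk2 => ?_
    rcases hk2 with ⟨-, hk2⟩
    rcases hk1 with ⟨-, hk1⟩
    simp only [Set.mem_singleton_iff] at hk2
    simp [Set.mem_Iio, hk2] at hk1
  have hmeas : MeasurableSet (A ∩ ({n} : Set ℕ)) := (Set.to_countable _).measurableSet
  rw [hsplit, measure_union hdisj hmeas,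
    ENNReal.toReal_add (measure_ne_top _ _) (measure_ne_top _ _)]
  congr 1
  by_cases hn : n ∈ A
  · rw [Set.indicator_of_mem hn, show A ∩ ({n} : Set ℕ) = {n} by
      ext k; simp only [Set.mem_inter_iff, Set.mem_singleton_iff]
      exact ⟨fun h => h.2, fun h => ⟨h ▸ hn, h⟩⟩]
    exact pois_real_singleton r n
  · rw [Set.indicator_of_notMem hn, show A ∩ ({n} : Set ℕ) = ∅ by
      ext k; simp only [Set.mem_inter_iff, Set.mem_singleton_iff, Set.mem_empty_iff_false,
        iff_false, not_and]
      rintro hk rfl; exact hn hk]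
    simp

private lemma Iio_zero_nat : (Set.Iio 0 : Set ℕ) = ∅ := by
  ext k; simp

private lemma pois_Iio_succ (r : ℝ≥0) (n : ℕ) :
    ((poissonMeasure r) (Set.Iio (n + 1))).toReal
      = ((poissonMeasure r) (Set.Iio n)).toReal + poissonPMFReal r n := by
  have := pois_step r Set.univ n
  simpa using this

private lemma pois_Iio_toReal (r : ℝ≥0) (n : ℕ) :
    ((poissonMeasure r) (Set.Iio n)).toReal = ∑ j ∈ Finset.range n, poissonPMFReal r j := by
  induction n with
  | zero => simp [Iio_zero_nat]
  | succ n ih => rw [pois_Iio_succ, ih, Finset.sum_range_succ]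

/-- The Stein equation. -/
private lemma steinF_identity (r : ℝ≥0) (A : Set ℕ) (n : ℕ) (hr : 0 < (r : ℝ)) :
    (r : ℝ) * steinF r A (n + 1) - n * steinF r A n
      = Set.indicator A (fun _ => (1 : ℝ)) n - ((poissonMeasure r) A).toReal := by
  classical
  have hrne : (r : ℝ) ≠ 0 := ne_of_gt hr
  have hexp : Real.exp (r : ℝ) * Real.exp (-(r : ℝ)) = 1 := by
    rw [← Real.exp_add]; simp
  have hind : ∀ k, Set.indicator A (fun _ => poissonPMFReal r k) k
      = Set.indicator A (fun _ => (1 : ℝ)) k * poissonPMFReal r k := by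
    intro k
    by_cases hk : k ∈ A <;> simp [hk]
  cases n with
  | zero =>
    simp only [steinF, Nat.cast_zero, zero_mul, sub_zero, Nat.factorial_zero,
      Nat.cast_one, zero_add, pow_one]
    have h1 : ((poissonMeasure r) (A ∩ Set.Iio 1)).toReal
        = Set.indicator A (fun _ => (1 : ℝ)) 0 * poissonPMFReal r 0 := by
      have := pois_step r A 0
      rw [Iio_zero_nat] at this
      simpa [hind 0] using this
    have h2 : ((poissonMeasure r) (Set.Iio 1)).toReal = poissonPMFReal r 0 := by
      have := pois_Iio_succ r 0
      rw [Iio_zero_nat] at this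
      simpa using this
    have hq0 : poissonPMFReal r 0 = Real.exp (-(r : ℝ)) := by simp [poissonPMFReal]
    rw [h1, h2, hq0]
    set e := Real.exp (r : ℝ)
    set e' := Real.exp (-(r : ℝ))
    set πA := ((poissonMeasure r) A).toReal
    set i := Set.indicator A (fun _ => (1 : ℝ)) 0
    have step : (r : ℝ) * ((1 : ℝ) / (r : ℝ) * e * (i * e' - πA * e'))
        = e * (i * e' - πA * e') := by field_simp
    rw [step]
    linear_combination (i - πA) * hexp
  | succ m =>
    simp only [steinF]
    rw [pois_step r A (m + 1), pois_Iio_succ r (m + 1), hind (m + 1)]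
    have hfact : ((m + 1)! : ℝ) = (m + 1) * m ! := by
      rw [Nat.factorial_succ]; push_cast; ring
    have hqm : poissonPMFReal r (m + 1)
        = Real.exp (-(r : ℝ)) * ((r : ℝ) ^ (m + 1) / (m + 1)!) := by
      rw [poissonPMFReal, mul_div_assoc]
    set e := Real.exp (r : ℝ)
    set e' := Real.exp (-(r : ℝ))
    set πA := ((poissonMeasure r) A).toReal
    set C1 := ((poissonMeasure r) (A ∩ Set.Iio (m + 1))).toReal
    set u1 := ((poissonMeasure r) (Set.Iio (m + 1))).toReal
    set qm := poissonPMFReal r (m + 1) with hqmdef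
    set i := Set.indicator A (fun _ => (1 : ℝ)) (m + 1)
    have hpowne : (r : ℝ) ^ (m + 1) ≠ 0 := pow_ne_zero _ hrne
    have hfactne : ((m + 1)! : ℝ) ≠ 0 := Nat.cast_ne_zero.mpr (Nat.factorial_ne_zero _)
    have hmne : (m ! : ℝ) ≠ 0 := Nat.cast_ne_zero.mpr (Nat.factorial_ne_zero _)
    have key : ∀ c d : ℝ,
        (r : ℝ) * (((m + 1)! : ℝ) / (r : ℝ) ^ (m + 1 + 1) * e * c)
          - ((m + 1 : ℕ) : ℝ) * ((m ! : ℝ) / (r : ℝ) ^ (m + 1) * e * d)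
        = ((m + 1)! : ℝ) / (r : ℝ) ^ (m + 1) * e * (c - d) := by
      intro c d
      rw [hfact]
      push_cast
      field_simp
      ring
    rw [key (C1 + i * qm - πA * (u1 + qm)) (C1 - πA * u1)]
    have hsimp : C1 + i * qm - πA * (u1 + qm) - (C1 - πA * u1) = (i - πA) * qm := by ring
    rw [hsimp]
    have hfin : ((m + 1)! : ℝ) / (r : ℝ) ^ (m + 1) * qm = e' := by
      rw [hqm]
      field_simp
    calc ((m + 1)! : ℝ) / (r : ℝ) ^ (m + 1) * e * ((i - πA) * qm)
        = e * (((m + 1)! : ℝ) / (r : ℝ) ^ (m + 1) * qm) * (i - πA) := by ring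
      _ = e * e' * (i - πA) := by rw [hfin]
      _ = i - πA := by rw [hexp]; ring

/-- The key uniform bound on the Stein solution. -/
private lemma steinF_bound (r : ℝ≥0) (A : Set ℕ) (n : ℕ) (hr : 0 < (r : ℝ)) :
    |steinF r A n| ≤ 1 := by
  classical
  cases n with
  | zero => simp [steinF]
  | succ n =>
    have hrne : (r : ℝ) ≠ 0 := ne_of_gt hr
    set π := poissonMeasure r
    set u := (π (Set.Iio (n + 1))).toReal with hu
    set a := (π (A ∩ Set.Iio (n + 1))).toReal with ha
    set b := (π (A ∩ (Set.Iio (n + 1))ᶜ)).toReal with hb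
    have hUmeas : MeasurableSet (Set.Iio (n + 1) : Set ℕ) := (Set.to_countable _).measurableSet
    have hsum1 : (π A).toReal = a + b := by
      have : π A = π (A ∩ Set.Iio (n + 1)) + π (A ∩ (Set.Iio (n + 1))ᶜ) := by
        rw [← measure_inter_add_diff A hUmeas, Set.diff_eq]
      rw [this, ENNReal.toReal_add (measure_ne_top _ _) (measure_ne_top _ _)]
    have hcompl : u + (π (Set.Iio (n + 1))ᶜ).toReal = 1 := by
      have : π (Set.Iio (n + 1)) + π (Set.Iio (n + 1))ᶜ = 1 := by
        rw [measure_add_measure_compl hUmeas]; simp [π]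
      have h2 := congrArg ENNReal.toReal this
      rwa [ENNReal.toReal_add (measure_ne_top _ _) (measure_ne_top _ _)] at h2
    have ha_le : a ≤ u := by
      apply ENNReal.toReal_le_toReal (measure_ne_top _ _) (measure_ne_top _ _) |>.mpr
      exact measure_mono Set.inter_subset_right
    have hb_le : b ≤ 1 - u := by
      have : b ≤ (π (Set.Iio (n + 1))ᶜ).toReal := by
        apply ENNReal.toReal_le_toReal (measure_ne_top _ _) (measure_ne_top _ _) |>.mpr
        exact measure_mono Set.inter_subset_right
      linarith
    have ha0 : 0 ≤ a := ENNReal.toReal_nonneg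
    have hb0 : 0 ≤ b := ENNReal.toReal_nonneg
    have hu0 : 0 ≤ u := ENNReal.toReal_nonneg
    have hu1 : u ≤ 1 := by
      have : (π (Set.Iio (n + 1))ᶜ).toReal ≥ 0 := ENNReal.toReal_nonneg
      linarith
    -- |cov| ≤ u (1 - u)
    have hcov : |a - (π A).toReal * u| ≤ u * (1 - u) := by
      rw [hsum1]
      rw [abs_le]
      constructor <;> nlinarith
    -- the analytic bound
    have hpos : 0 < (n ! : ℝ) / (r : ℝ) ^ (n + 1) * Real.exp (r : ℝ) := by positivity
    have hmain : (n ! : ℝ) / (r : ℝ) ^ (n + 1) * Real.exp (r : ℝ) * (u * (1 - u)) ≤ 1 := by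
      -- rewrite u and 1 - u as series
      have hu_eq : u = Real.exp (-(r : ℝ)) * ∑ j ∈ Finset.range (n + 1), (r : ℝ) ^ j / j ! := by
        rw [hu, pois_Iio_toReal, Finset.mul_sum]
        refine Finset.sum_congr rfl fun j _ => ?_
        rw [poissonPMFReal, mul_div_assoc]
      have hqsummable : Summable (fun k => poissonPMFReal r k) := (poissonPMFRealSum r).summable
      have htail : 1 - u = Real.exp (-(r : ℝ)) * ∑' m : ℕ, (r : ℝ) ^ (m + n + 1) / (m + n + 1)! := by
        have h1 := Summable.sum_add_tsum_nat_add (f := fun k => poissonPMFReal r k) (n + 1) hqsummable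
        rw [show (∑' k, poissonPMFReal r k) = 1 from (poissonPMFRealSum r).tsum_eq] at h1
        have h2 : u = ∑ i ∈ Finset.range (n + 1), poissonPMFReal r i := by
          rw [hu, pois_Iio_toReal]
        rw [h2]
        have h3 : ∀ m : ℕ, poissonPMFReal r (m + (n + 1))
            = Real.exp (-(r : ℝ)) * ((r : ℝ) ^ (m + n + 1) / (m + n + 1)!) := by
          intro m
          rw [poissonPMFReal, mul_div_assoc]
          norm_num [show m + (n + 1) = m + n + 1 by ring]
        have h4 : (∑' m : ℕ, poissonPMFReal r (m + (n + 1)))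
            = Real.exp (-(r : ℝ)) * ∑' m : ℕ, (r : ℝ) ^ (m + n + 1) / (m + n + 1)! := by
          rw [tsum_congr h3, tsum_mul_left]
        linarith [h1, h4]
      rw [htail, hu_eq]
      have hkey := series_key (r : ℝ) (le_of_lt hr) n
      have hee : Real.exp (-(r : ℝ)) * Real.exp (-(r : ℝ)) * Real.exp (r : ℝ)
          = Real.exp (-(r : ℝ)) := by
        rw [← Real.exp_add, ← Real.exp_add]; ring_nf
      set S := ∑ j ∈ Finset.range (n + 1), (r : ℝ) ^ j / (Nat.factorial j : ℝ)
      set T := ∑' m : ℕ, (r : ℝ) ^ (m + n + 1) / (Nat.factorial (m + n + 1) : ℝ)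
      have hS0 : 0 ≤ S := Finset.sum_nonneg fun j _ => by positivity
      have hT0 : 0 ≤ T := tsum_nonneg fun m => by positivity
      calc (n ! : ℝ) / (r : ℝ) ^ (n + 1) * Real.exp (r : ℝ)
            * (Real.exp (-(r : ℝ)) * S * (Real.exp (-(r : ℝ)) * T))
          = (n ! : ℝ) / (r : ℝ) ^ (n + 1) * (Real.exp (-(r : ℝ)) * Real.exp (-(r : ℝ))
              * Real.exp (r : ℝ)) * (S * T) := by ring
        _ = (n ! : ℝ) / (r : ℝ) ^ (n + 1) * Real.exp (-(r : ℝ)) * (S * T) := by rw [hee]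
        _ ≤ (n ! : ℝ) / (r : ℝ) ^ (n + 1) * Real.exp (-(r : ℝ))
              * ((r : ℝ) ^ (n + 1) / n ! * Real.exp (r : ℝ)) := by
            refine mul_le_mul_of_nonneg_left hkey (by positivity)
        _ = Real.exp (-(r : ℝ)) * Real.exp (r : ℝ)
              * ((n ! : ℝ) / (r : ℝ) ^ (n + 1) * ((r : ℝ) ^ (n + 1) / n !)) := by ring
        _ = 1 := by
            have h5 : (n ! : ℝ) / (r : ℝ) ^ (n + 1) * ((r : ℝ) ^ (n + 1) / (n ! : ℝ)) = 1 := by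
              field_simp
            rw [h5, mul_one, ← Real.exp_add]
            simp
    calc |steinF r A (n + 1)|
        = (n ! : ℝ) / (r : ℝ) ^ (n + 1) * Real.exp (r : ℝ) * |a - (π A).toReal * u| := by
          rw [steinF, abs_mul, abs_of_pos hpos]
      _ ≤ (n ! : ℝ) / (r : ℝ) ^ (n + 1) * Real.exp (r : ℝ) * (u * (1 - u)) :=
          mul_le_mul_of_nonneg_left hcov (le_of_lt hpos)
      _ ≤ 1 := hmain



/-- Total variation distance between two measures: `sup_A |μ(A) − ν(A)|`. -/
def tvDist {α : Type*} [MeasurableSpace α] (μ ν : Measure α) : ℝ :=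
  ⨆ A : Set α, |(μ A).toReal - (ν A).toReal|

private lemma poissonMeasure_zero_eq_dirac : poissonMeasure 0 = Measure.dirac 0 := by
  apply Measure.ext_of_singleton
  intro n
  rw [poissonMeasure_singleton]
  cases n <;> simp

/-- **Stein–Chen Poisson approximation** (Arratia–Goldstein–Gordon).
For dependent Bernoulli variables `I j`, `j ∈ J`, with `W = Σ_j I j` and `Z` Poisson with
mean `λ = E[W]`, one has `d_TV(L(W), L(Z)) ≤ 2(b₁ + b₂ + b₃)`. -/
theorem stein_chen_poisson_approximation
    {Ω : Type*} [MeasurableSpace Ω] (P : Measure Ω) [IsProbabilityMeasure P]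
    {J : Type*} [Fintype J] [DecidableEq J]
    (I : J → Ω → ℕ) (hImeas : ∀ j, Measurable (I j))
    (hBernoulli : ∀ j ω, I j ω ≤ 1)
    (p : J → ℝ) (hp : ∀ j, p j = (P {ω | I j ω = 1}).toReal)
    (hp0 : ∀ j, 0 < p j) (hp1 : ∀ j, p j < 1)
    (B : J → Finset J) (hB : ∀ j, j ∈ B j)
    (W : Ω → ℕ) (hW : ∀ ω, W ω = ∑ j, I j ω)
    (lam : ℝ≥0) (hlam : (lam : ℝ) = ∫ ω, (W ω : ℝ) ∂P) :
    tvDist (P.map W) (poissonMeasure lam) ≤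
      2 * ((∑ j, ∑ k ∈ B j, p j * p k)
        + (∑ j, ∑ k ∈ (B j).erase j, (P {ω | I j ω = 1 ∧ I k ω = 1}).toReal)
        + (∑ j, ∫ ω,
            |(P[(fun ω' => (I j ω' : ℝ) - p j) |
                ⨆ k ∈ ((Finset.univ \ B j : Finset J) : Set J),
                  MeasurableSpace.comap (I k) (inferInstance : MeasurableSpace ℕ)]) ω| ∂P)) := by
  classical
  have hmeasN : ∀ A : Set ℕ, MeasurableSet A := fun A => (Set.to_countable A).measurableSet
  have hWmeas : Measurable W := by
    have : W = fun ω => ∑ j, I j ω := funext hW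
    rw [this]
    exact Finset.measurable_sum _ fun j _ => hImeas j
  -- real-valued Bernoullis
  set X : J → Ω → ℝ := fun j ω => (I j ω : ℝ) with hX
  have hXmeas : ∀ j, Measurable (X j) := fun j => measurable_from_top.comp (hImeas j)
  have hX01 : ∀ j ω, 0 ≤ X j ω ∧ X j ω ≤ 1 := by
    intro j ω
    constructor
    · positivity
    · simp only [hX]
      exact_mod_cast hBernoulli j ω
  have hXind : ∀ j ω, X j ω = Set.indicator {ω' | I j ω' = 1} (fun _ => (1 : ℝ)) ω := by
    intro j ω
    by_cases h : I j ω = 1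
    · simp [hX, h, Set.indicator_of_mem, Set.mem_setOf_eq]
    · have h0 : I j ω = 0 := by have := hBernoulli j ω; omega
      simp [hX, h0, Set.indicator_of_notMem, Set.mem_setOf_eq, h]
  have hSetMeas : ∀ j, MeasurableSet {ω' | I j ω' = 1} := fun j =>
    (hImeas j) (measurableSet_singleton 1)
  have hbint : ∀ (g : Ω → ℝ), Measurable g → ∀ C : ℝ, (∀ ω, |g ω| ≤ C) → Integrable g P := by
    intro g hg C hC
    refine Integrable.mono' (integrable_const C) hg.aestronglyMeasurable ?_
    exact ae_of_all _ fun ω => by simpa [Real.norm_eq_abs] using hC ω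
  have hXint : ∀ j, Integrable (X j) P := fun j =>
    hbint _ (hXmeas j) 1 fun ω => by
      rcases hX01 j ω with ⟨h0, h1⟩; rw [abs_of_nonneg h0]; exact h1
  have hXintegral : ∀ j, ∫ ω, X j ω ∂P = p j := by
    intro j
    rw [hp j]
    have : ∫ ω, X j ω ∂P = ∫ ω, Set.indicator {ω' | I j ω' = 1} (fun _ => (1 : ℝ)) ω ∂P :=
      integral_congr_ae (ae_of_all _ fun ω => hXind j ω)
    rw [this, integral_indicator_const (1 : ℝ) (hSetMeas j)]
    simp [measureReal_def]
  -- product of Bernoullis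
  have hXXind : ∀ j k ω, X j ω * X k ω
      = Set.indicator {ω' | I j ω' = 1 ∧ I k ω' = 1} (fun _ => (1 : ℝ)) ω := by
    intro j k ω
    by_cases hj : I j ω = 1
    · by_cases hk : I k ω = 1
      · simp [hX, hj, hk, Set.indicator_of_mem, Set.mem_setOf_eq]
      · have h0 : I k ω = 0 := by have := hBernoulli k ω; omega
        simp [hX, hj, h0, Set.indicator_apply, Set.mem_setOf_eq, hk]
    · have h0 : I j ω = 0 := by have := hBernoulli j ω; omega
      simp [hX, h0, Set.indicator_apply, Set.mem_setOf_eq, hj]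
  have hXXintegral : ∀ j k, ∫ ω, X j ω * X k ω ∂P
      = (P {ω | I j ω = 1 ∧ I k ω = 1}).toReal := by
    intro j k
    have hmeas : MeasurableSet {ω | I j ω = 1 ∧ I k ω = 1} := by
      have : {ω | I j ω = 1 ∧ I k ω = 1}
          = (I j ⁻¹' {1}) ∩ (I k ⁻¹' {1}) := by ext ω; simp [Set.mem_setOf_eq]
      rw [this]
      exact ((hImeas j) (measurableSet_singleton 1)).inter ((hImeas k) (measurableSet_singleton 1))
    have : ∫ ω, X j ω * X k ω ∂P
        = ∫ ω, Set.indicator {ω' | I j ω' = 1 ∧ I k ω' = 1} (fun _ => (1 : ℝ)) ω ∂P :=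
      integral_congr_ae (ae_of_all _ fun ω => hXXind j k ω)
    rw [this, integral_indicator_const (1 : ℝ) hmeas]
    simp [measureReal_def]
  -- b3 summands are nonneg
  set m : J → MeasurableSpace Ω := fun j =>
    ⨆ k ∈ ((Finset.univ \ B j : Finset J) : Set J),
      MeasurableSpace.comap (I k) (inferInstance : MeasurableSpace ℕ) with hm_def
  set b3 : J → ℝ := fun j => ∫ ω, |(P[(fun ω' => (I j ω' : ℝ) - p j) | m j]) ω| ∂P with hb3
  have hb3nonneg : ∀ j, 0 ≤ b3 j := fun j =>
    integral_nonneg fun ω => abs_nonneg _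
  rcases isEmpty_or_nonempty J with hJ | hJ
  · -- degenerate case
    have hlam0 : lam = 0 := by
      have h1 : ∀ ω, (W ω : ℝ) = 0 := fun ω => by rw [hW ω]; simp
      have : (lam : ℝ) = 0 := by rw [hlam]; simp [h1]
      exact_mod_cast this
    have hW0 : W = fun _ => 0 := funext fun ω => by rw [hW ω]; simp
    have hmap : P.map W = Measure.dirac 0 := by
      rw [hW0, Measure.map_const]
      simp
    rw [hlam0, hmap, poissonMeasure_zero_eq_dirac]
    have : tvDist (Measure.dirac (0 : ℕ)) (Measure.dirac 0) = 0 := by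
      rw [tvDist]
      have : ∀ A : Set ℕ, |((Measure.dirac (0:ℕ)) A).toReal - ((Measure.dirac (0:ℕ)) A).toReal|
          = 0 := fun A => by simp
      simp [this]
    rw [this]
    have hempty : ∀ g : J → ℝ, ∑ j, g j = 0 := fun g => by simp
    rw [hempty, hempty, hempty]
    norm_num
  · -- main case
    have hplam : (lam : ℝ) = ∑ j, p j := by
      rw [hlam]
      have h1 : ∀ ω, (W ω : ℝ) = ∑ j, X j ω := fun ω => by
        rw [hW ω]; push_cast; rfl
      rw [integral_congr_ae (ae_of_all _ h1), integral_finset_sum _ fun j _ => hXint j]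
      exact Finset.sum_congr rfl fun j _ => hXintegral j
    have hr : 0 < (lam : ℝ) := by
      rw [hplam]
      exact Finset.sum_pos (fun j _ => hp0 j) Finset.univ_nonempty
    have hWcast : ∀ ω, (W ω : ℝ) = ∑ j, X j ω := fun ω => by
      rw [hW ω]; push_cast; rfl
    -- neighborhood sums
    set V : J → Ω → ℕ := fun j ω => ∑ k ∈ Finset.univ \ B j, I k ω with hV
    set U : J → Ω → ℕ := fun j ω => ∑ k ∈ B j, I k ω with hUdef
    have hWVU : ∀ j ω, W ω = V j ω + U j ω := by
      intro j ω
      rw [hW ω]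
      simp only [hV, hUdef]
      rw [← Finset.sum_sdiff (Finset.subset_univ (B j))]
    have hVamb : ∀ j, Measurable (V j) := fun j =>
      Finset.measurable_sum _ fun k _ => hImeas k
    have hUamb : ∀ j, Measurable (U j) := fun j =>
      Finset.measurable_sum _ fun k _ => hImeas k
    have hUcast : ∀ j ω, ((U j ω : ℕ) : ℝ) = ∑ k ∈ B j, X k ω := by
      intro j ω; simp only [hUdef]; push_cast; rfl
    have hUint : ∀ j, ∫ ω, ((U j ω : ℕ) : ℝ) ∂P = ∑ k ∈ B j, p k := by
      intro j
      rw [integral_congr_ae (ae_of_all _ (hUcast j)),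
        integral_finset_sum _ fun k _ => hXint k]
      exact Finset.sum_congr rfl fun k _ => hXintegral k
    have hUj1 : ∀ j ω, I j ω ≤ U j ω := by
      intro j ω
      simp only [hUdef]
      exact Finset.single_le_sum (f := fun k => I k ω) (fun k _ => Nat.zero_le _) (hB j)
    -- term 2 identity
    have hT2id : ∀ j ω, ((I j ω * (U j ω - 1) : ℕ) : ℝ) = ∑ k ∈ (B j).erase j, X j ω * X k ω := by
      intro j ω
      by_cases hj : I j ω = 1
      · have hUsum : U j ω = I j ω + ∑ k ∈ (B j).erase j, I k ω := by
          simp only [hUdef]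
          exact (Finset.add_sum_erase _ _ (hB j)).symm
        rw [hj] at hUsum
        have h2 : I j ω * (U j ω - 1) = ∑ k ∈ (B j).erase j, I k ω := by
          rw [hj, hUsum]; simp
        rw [h2]
        push_cast
        refine Finset.sum_congr rfl fun k _ => ?_
        simp [hX, hj]
      · have hj0 : I j ω = 0 := by have := hBernoulli j ω; omega
        simp [hj0, hX]
    have hXXint : ∀ j k, Integrable (fun ω => X j ω * X k ω) P := by
      intro j k
      refine hbint _ ((hXmeas j).mul (hXmeas k)) 1 fun ω => ?_
      rw [abs_mul]
      rcases hX01 j ω with ⟨hj0, hj1⟩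
      rcases hX01 k ω with ⟨hk0, hk1⟩
      rw [abs_of_nonneg hj0, abs_of_nonneg hk0]
      nlinarith
    have hT2int : ∀ j, ∫ ω, ((I j ω * (U j ω - 1) : ℕ) : ℝ) ∂P
        = ∑ k ∈ (B j).erase j, (P {ω | I j ω = 1 ∧ I k ω = 1}).toReal := by
      intro j
      rw [integral_congr_ae (ae_of_all _ (hT2id j)),
        integral_finset_sum _ fun k _ => hXXint j k]
      exact Finset.sum_congr rfl fun k _ => hXXintegral j k
    -- the sup over A
    rw [tvDist]
    refine ciSup_le fun A => ?_
    set f := steinF lam A with hf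
    have hfb : ∀ n, |f n| ≤ 1 := fun n => steinF_bound lam A n hr
    have hWA : ((P.map W) A).toReal = ∫ ω, Set.indicator A (fun _ => (1 : ℝ)) (W ω) ∂P := by
      rw [Measure.map_apply hWmeas (hmeasN A)]
      have h1 : ∀ ω, Set.indicator A (fun _ => (1 : ℝ)) (W ω)
          = Set.indicator (W ⁻¹' A) (fun _ => (1 : ℝ)) ω := by
        intro ω
        by_cases h : W ω ∈ A <;> simp [Set.indicator_apply, h, Set.mem_preimage]
      rw [integral_congr_ae (ae_of_all _ fun ω => (h1 ω)),
        integral_indicator_const (1 : ℝ) (hWmeas (hmeasN A))]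
      simp [measureReal_def]
    have hindint : Integrable (fun ω => Set.indicator A (fun _ => (1 : ℝ)) (W ω)) P := by
      refine hbint _ ?_ 1 fun ω => ?_
      · exact Measurable.comp (measurable_from_top
          (f := fun n => Set.indicator A (fun _ => (1 : ℝ)) n)) hWmeas
      · by_cases h : W ω ∈ A <;> simp [Set.indicator_apply, h]
    have hdiff : ((P.map W) A).toReal - ((poissonMeasure lam) A).toReal
        = ∫ ω, ((lam : ℝ) * f (W ω + 1) - (W ω : ℝ) * f (W ω)) ∂P := by
      have h2 : ∀ ω, Set.indicator A (fun _ => (1 : ℝ)) (W ω)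
            - ((poissonMeasure lam) A).toReal
          = (lam : ℝ) * f (W ω + 1) - (W ω : ℝ) * f (W ω) := fun ω =>
        (steinF_identity lam A (W ω) hr).symm
      have h3 : ((P.map W) A).toReal - ((poissonMeasure lam) A).toReal
          = ∫ ω, (Set.indicator A (fun _ => (1 : ℝ)) (W ω)
              - ((poissonMeasure lam) A).toReal) ∂P := by
        rw [integral_sub hindint (integrable_const _), hWA]
        simp
      rw [h3]
      exact integral_congr_ae (ae_of_all _ h2)
    -- split into per-j integrals
    have hsplit : ∀ ω, (lam : ℝ) * f (W ω + 1) - (W ω : ℝ) * f (W ω)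
        = ∑ j, (p j * f (W ω + 1) - X j ω * f (W ω)) := by
      intro ω
      rw [hplam, hWcast ω, Finset.sum_mul, Finset.sum_mul, ← Finset.sum_sub_distrib]
    have hfWmeas : Measurable (fun ω => f (W ω + 1)) :=
      Measurable.comp (measurable_from_top (f := fun n => f (n + 1))) hWmeas
    have hfW0meas : Measurable (fun ω => f (W ω)) :=
      Measurable.comp (measurable_from_top (f := f)) hWmeas
    have hFjint : ∀ j, Integrable (fun ω => p j * f (W ω + 1) - X j ω * f (W ω)) P := by
      intro j
      refine hbint _ ((hfWmeas.const_mul (p j)).sub ((hXmeas j).mul hfW0meas)) (|p j| + 1) ?_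
      intro ω
      have h1 : |p j * f (W ω + 1)| ≤ |p j| := by
        rw [abs_mul]
        nlinarith [hfb (W ω + 1), abs_nonneg (p j), abs_nonneg (f (W ω + 1))]
      have h2 : |X j ω * f (W ω)| ≤ 1 := by
        rw [abs_mul]
        rcases hX01 j ω with ⟨h0, hle⟩
        rw [abs_of_nonneg h0]
        nlinarith [hfb (W ω), abs_nonneg (f (W ω))]
      calc |p j * f (W ω + 1) - X j ω * f (W ω)|
          ≤ |p j * f (W ω + 1)| + |X j ω * f (W ω)| := abs_sub _ _
        _ ≤ |p j| + 1 := add_le_add h1 h2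
    have hEj : ∀ j, |∫ ω, (p j * f (W ω + 1) - X j ω * f (W ω)) ∂P|
        ≤ 2 * ∑ k ∈ B j, p j * p k
          + 2 * ∑ k ∈ (B j).erase j, (P {ω | I j ω = 1 ∧ I k ω = 1}).toReal
          + b3 j := by
      intro j
      set g : Ω → ℝ := fun ω => f (V j ω + 1) with hg
      have hgamb : Measurable g :=
        Measurable.comp (measurable_from_top (f := fun n => f (n + 1))) (hVamb j)
      have hgb : ∀ ω, |g ω| ≤ 1 := fun ω => hfb _
      have habsint : ∀ q : Ω → ℝ, |∫ ω, q ω ∂P| ≤ ∫ ω, |q ω| ∂P := fun q => by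
        simpa [Real.norm_eq_abs] using norm_integral_le_integral_norm (f := q) (μ := P)
      have hdecomp : ∀ ω, p j * f (W ω + 1) - X j ω * f (W ω)
          = p j * (f (W ω + 1) - g ω) - X j ω * (f (W ω) - g ω) + (p j - X j ω) * g ω := by
        intro ω; ring
      -- === Term 1 ===
      have hD1meas : Measurable (fun ω => f (W ω + 1) - g ω) := hfWmeas.sub hgamb
      have hD1b2 : ∀ ω, |f (W ω + 1) - g ω| ≤ 2 := by
        intro ω
        calc |f (W ω + 1) - g ω| ≤ |f (W ω + 1)| + |g ω| := abs_sub _ _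
          _ ≤ 1 + 1 := add_le_add (hfb _) (hgb ω)
          _ = 2 := by norm_num
      have hD1b : ∀ ω, |f (W ω + 1) - g ω| ≤ 2 * ((U j ω : ℕ) : ℝ) := by
        intro ω
        by_cases hU0 : U j ω = 0
        · have hWV : W ω = V j ω := by rw [hWVU j ω, hU0]; omega
          rw [hWV, hU0]
          simp [hg]
        · have h1 : (1 : ℝ) ≤ ((U j ω : ℕ) : ℝ) := by
            exact_mod_cast Nat.one_le_iff_ne_zero.mpr hU0
          calc |f (W ω + 1) - g ω| ≤ 2 := hD1b2 ω
            _ ≤ 2 * ((U j ω : ℕ) : ℝ) := by linarith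
      have hD1int : Integrable (fun ω => f (W ω + 1) - g ω) P := hbint _ hD1meas 2 hD1b2
      have hUcastmeas : Measurable (fun ω => ((U j ω : ℕ) : ℝ)) :=
        Measurable.comp (measurable_from_top (f := fun n : ℕ => (n : ℝ))) (hUamb j)
      have hUle : ∀ ω, U j ω ≤ (B j).card := by
        intro ω
        simp only [hUdef]
        calc ∑ k ∈ B j, I k ω ≤ ∑ _k ∈ B j, 1 :=
            Finset.sum_le_sum fun k _ => hBernoulli k ω
          _ = (B j).card := by simp
      have hUcastint : Integrable (fun ω => ((U j ω : ℕ) : ℝ)) P := by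
        refine hbint _ hUcastmeas ((B j).card : ℝ) fun ω => ?_
        rw [abs_of_nonneg (by positivity)]
        exact_mod_cast hUle ω
      have hT1 : |∫ ω, (f (W ω + 1) - g ω) ∂P| ≤ 2 * ∑ k ∈ B j, p k := by
        calc |∫ ω, (f (W ω + 1) - g ω) ∂P| ≤ ∫ ω, |f (W ω + 1) - g ω| ∂P :=
            habsint _
          _ ≤ ∫ ω, 2 * ((U j ω : ℕ) : ℝ) ∂P :=
            integral_mono hD1int.abs (hUcastint.const_mul 2) hD1b
          _ = 2 * ∑ k ∈ B j, p k := by rw [integral_const_mul, hUint j]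
      -- === Term 2 ===
      have hd2meas : Measurable (fun ω => X j ω * (f (W ω) - g ω)) :=
        (hXmeas j).mul (hfW0meas.sub hgamb)
      have hd2b2 : ∀ ω, |X j ω * (f (W ω) - g ω)| ≤ 2 := by
        intro ω
        rcases hX01 j ω with ⟨h0, h1⟩
        rw [abs_mul, abs_of_nonneg h0]
        have hfg2 : |f (W ω) - g ω| ≤ 2 := by
          calc |f (W ω) - g ω| ≤ |f (W ω)| + |g ω| := abs_sub _ _
            _ ≤ 1 + 1 := add_le_add (hfb _) (hgb ω)
            _ = 2 := by norm_num
        calc X j ω * |f (W ω) - g ω| ≤ 1 * 2 :=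
            mul_le_mul h1 hfg2 (abs_nonneg _) (by norm_num)
          _ = 2 := by norm_num
      have hd2b : ∀ ω, |X j ω * (f (W ω) - g ω)| ≤ 2 * ((I j ω * (U j ω - 1) : ℕ) : ℝ) := by
        intro ω
        by_cases hj1 : I j ω = 1
        · have hU1 : 1 ≤ U j ω := hj1 ▸ hUj1 j ω
          by_cases hU : U j ω = 1
          · have hWV : W ω = V j ω + 1 := by rw [hWVU j ω, hU]
            rw [hWV, hj1, hU]
            simp [hg]
          · have hU2 : 2 ≤ U j ω := by omega
            have h2 : (1 : ℝ) ≤ ((I j ω * (U j ω - 1) : ℕ) : ℝ) := by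
              have : 1 ≤ I j ω * (U j ω - 1) := by
                rw [hj1, one_mul]; omega
              exact_mod_cast this
            calc |X j ω * (f (W ω) - g ω)| ≤ 2 := hd2b2 ω
              _ ≤ 2 * ((I j ω * (U j ω - 1) : ℕ) : ℝ) := by linarith
        · have hj0 : I j ω = 0 := by have := hBernoulli j ω; omega
          simp [hX, hj0]
      have hd2int : Integrable (fun ω => X j ω * (f (W ω) - g ω)) P := hbint _ hd2meas 2 hd2b2
      have hT2castmeas : Measurable (fun ω => ((I j ω * (U j ω - 1) : ℕ) : ℝ)) := by
        have hpair : Measurable (fun ω => (I j ω, U j ω)) := (hImeas j).prodMk (hUamb j)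
        exact (show Measurable (fun q : ℕ × ℕ => ((q.1 * (q.2 - 1) : ℕ) : ℝ)) from
          fun s _ => (Set.to_countable _).measurableSet).comp hpair
      have hT2castint : Integrable (fun ω => ((I j ω * (U j ω - 1) : ℕ) : ℝ)) P := by
        refine hbint _ hT2castmeas ((B j).card : ℝ) fun ω => ?_
        rw [abs_of_nonneg (by positivity)]
        have : I j ω * (U j ω - 1) ≤ (B j).card := by
          have h1 := hBernoulli j ω
          have h2 := hUle ω
          have h3 := hUj1 j ω
          calc I j ω * (U j ω - 1) ≤ 1 * (U j ω - 1) := Nat.mul_le_mul_right _ h1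
            _ ≤ (B j).card := by omega
        exact_mod_cast this
      have hT2 : |∫ ω, X j ω * (f (W ω) - g ω) ∂P|
          ≤ 2 * ∑ k ∈ (B j).erase j, (P {ω | I j ω = 1 ∧ I k ω = 1}).toReal := by
        calc |∫ ω, X j ω * (f (W ω) - g ω) ∂P| ≤ ∫ ω, |X j ω * (f (W ω) - g ω)| ∂P :=
            habsint _
          _ ≤ ∫ ω, 2 * ((I j ω * (U j ω - 1) : ℕ) : ℝ) ∂P :=
            integral_mono hd2int.abs (hT2castint.const_mul 2) hd2b
          _ = 2 * ∑ k ∈ (B j).erase j, (P {ω | I j ω = 1 ∧ I k ω = 1}).toReal := by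
            rw [integral_const_mul, hT2int j]
      -- === Term 3 ===
      have hm_le : m j ≤ (inferInstance : MeasurableSpace Ω) := by
        simp only [hm_def]
        refine iSup_le fun k => iSup_le fun _ => ?_
        exact measurable_iff_comap_le.mp (hImeas k)
      have hgm : Measurable[m j] g := by
        have hVm : Measurable[m j] (V j) := by
          simp only [hV]
          refine Finset.measurable_sum _ fun k hk => ?_
          have hcomap : MeasurableSpace.comap (I k)
              (inferInstance : MeasurableSpace ℕ) ≤ m j := by
            simp only [hm_def]
            exact le_iSup₂ (f := fun (k : J) (_ : k ∈ ((Finset.univ \ B j : Finset J) : Set J)) =>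
              MeasurableSpace.comap (I k) (inferInstance : MeasurableSpace ℕ)) k
              (Finset.mem_coe.mpr hk)
          exact measurable_iff_comap_le.mpr hcomap
        exact Measurable.comp (measurable_from_top (f := fun n => f (n + 1))) hVm
      set h : Ω → ℝ := fun ω => p j - X j ω with hh
      have hhmeas : Measurable h := measurable_const.sub (hXmeas j)
      have hhb : ∀ ω, |h ω| ≤ |p j| + 1 := by
        intro ω
        rcases hX01 j ω with ⟨h0, h1⟩
        calc |h ω| ≤ |p j| + |X j ω| := abs_sub _ _
          _ ≤ |p j| + 1 := by rw [abs_of_nonneg h0]; linarith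
      have hhint : Integrable h P := hbint _ hhmeas (|p j| + 1) hhb
      have hghint : Integrable (g * h) P := by
        refine hbint _ (hgamb.mul hhmeas) (|p j| + 1) fun ω => ?_
        have : |(g * h) ω| = |g ω| * |h ω| := abs_mul _ _
        rw [this]
        calc |g ω| * |h ω| ≤ 1 * (|p j| + 1) :=
            mul_le_mul (hgb ω) (hhb ω) (abs_nonneg _) (by norm_num)
          _ = |p j| + 1 := one_mul _
      have hcond : P[g * h|m j] =ᵐ[P] g * P[h|m j] :=
        condExp_mul_of_stronglyMeasurable_left hgm.stronglyMeasurable hghint hhint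
      have hint3 : ∫ ω, (p j - X j ω) * g ω ∂P = ∫ ω, (g * P[h|m j]) ω ∂P := by
        have e1 : ∫ ω, (p j - X j ω) * g ω ∂P = ∫ ω, (g * h) ω ∂P :=
          integral_congr_ae (ae_of_all _ fun ω => by
            show (p j - X j ω) * g ω = g ω * h ω
            simp only [hh]; ring)
        rw [e1, ← integral_condExp hm_le, integral_congr_ae hcond]
      have hcint : Integrable (P[h|m j]) P := integrable_condExp
      have hgcint : Integrable (g * P[h|m j]) P :=
        hcint.bdd_mul (c := 1) hgamb.aestronglyMeasurable
          (ae_of_all _ fun ω => by simpa [Real.norm_eq_abs] using hgb ω)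
      have hb3eq : b3 j = ∫ ω, |(P[h|m j]) ω| ∂P := by
        have hφ : (fun ω' => (I j ω' : ℝ) - p j) = -h := funext fun ω => by
          simp only [hh, hX, Pi.neg_apply]; ring
        simp only [hb3, hφ]
        refine integral_congr_ae (((condExp_neg (μ := P) (m := m j) h)).mono fun ω hω => ?_)
        show |(P[-h|m j]) ω| = |(P[h|m j]) ω|
        rw [hω, Pi.neg_apply, abs_neg]
      have hT3 : |∫ ω, (p j - X j ω) * g ω ∂P| ≤ b3 j := by
        rw [hint3, hb3eq]
        calc |∫ ω, (g * P[h|m j]) ω ∂P| ≤ ∫ ω, |(g * P[h|m j]) ω| ∂P :=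
            habsint _
          _ ≤ ∫ ω, |(P[h|m j]) ω| ∂P := by
            refine integral_mono hgcint.abs hcint.abs fun ω => ?_
            have : |(g * P[h|m j]) ω| = |g ω| * |(P[h|m j]) ω| := abs_mul _ _
            rw [this]
            calc |g ω| * |(P[h|m j]) ω| ≤ 1 * |(P[h|m j]) ω| :=
                mul_le_mul_of_nonneg_right (hgb ω) (abs_nonneg _)
              _ = |(P[h|m j]) ω| := one_mul _
      -- === assemble the three terms ===
      have hd3int : Integrable (fun ω => (p j - X j ω) * g ω) P := by
        refine hbint _ (hhmeas.mul hgamb) (|p j| + 1) fun ω => ?_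
        have : |(p j - X j ω) * g ω| = |h ω| * |g ω| := abs_mul _ _
        rw [this]
        calc |h ω| * |g ω| ≤ (|p j| + 1) * 1 :=
            mul_le_mul (hhb ω) (hgb ω) (abs_nonneg _) (by positivity)
          _ = |p j| + 1 := mul_one _
      have hsplitj : ∫ ω, (p j * f (W ω + 1) - X j ω * f (W ω)) ∂P
          = p j * (∫ ω, (f (W ω + 1) - g ω) ∂P) - (∫ ω, X j ω * (f (W ω) - g ω) ∂P)
            + ∫ ω, (p j - X j ω) * g ω ∂P := by
        rw [integral_congr_ae (ae_of_all _ hdecomp)]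
        have e2 := integral_add (μ := P)
          (f := fun ω => p j * (f (W ω + 1) - g ω) - X j ω * (f (W ω) - g ω))
          (g := fun ω => (p j - X j ω) * g ω)
          (by exact (hD1int.const_mul (p j)).sub hd2int) hd3int
        have e3 := integral_sub (μ := P)
          (f := fun ω => p j * (f (W ω + 1) - g ω))
          (g := fun ω => X j ω * (f (W ω) - g ω))
          (by exact hD1int.const_mul (p j)) hd2int
        rw [e2, e3, integral_const_mul]
      rw [hsplitj]
      have hpk0 : 0 ≤ ∑ k ∈ B j, p k := Finset.sum_nonneg fun k _ => le_of_lt (hp0 k)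
      have habs : |p j * (∫ ω, (f (W ω + 1) - g ω) ∂P) - (∫ ω, X j ω * (f (W ω) - g ω) ∂P)
            + ∫ ω, (p j - X j ω) * g ω ∂P|
          ≤ p j * |∫ ω, (f (W ω + 1) - g ω) ∂P| + |∫ ω, X j ω * (f (W ω) - g ω) ∂P|
            + |∫ ω, (p j - X j ω) * g ω ∂P| := by
        have h1 := abs_add_le (p j * (∫ ω, (f (W ω + 1) - g ω) ∂P)
          - (∫ ω, X j ω * (f (W ω) - g ω) ∂P)) (∫ ω, (p j - X j ω) * g ω ∂P)
        have h2 := abs_sub (p j * (∫ ω, (f (W ω + 1) - g ω) ∂P))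
          (∫ ω, X j ω * (f (W ω) - g ω) ∂P)
        have h3 : |p j * (∫ ω, (f (W ω + 1) - g ω) ∂P)|
            = p j * |∫ ω, (f (W ω + 1) - g ω) ∂P| := by
          rw [abs_mul, abs_of_pos (hp0 j)]
        linarith
      calc |p j * (∫ ω, (f (W ω + 1) - g ω) ∂P) - (∫ ω, X j ω * (f (W ω) - g ω) ∂P)
            + ∫ ω, (p j - X j ω) * g ω ∂P|
          ≤ p j * |∫ ω, (f (W ω + 1) - g ω) ∂P| + |∫ ω, X j ω * (f (W ω) - g ω) ∂P|
            + |∫ ω, (p j - X j ω) * g ω ∂P| := habs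
        _ ≤ p j * (2 * ∑ k ∈ B j, p k)
            + 2 * ∑ k ∈ (B j).erase j, (P {ω | I j ω = 1 ∧ I k ω = 1}).toReal + b3 j := by
            have := mul_le_mul_of_nonneg_left hT1 (le_of_lt (hp0 j))
            linarith [hT2, hT3]
        _ = 2 * ∑ k ∈ B j, p j * p k
            + 2 * ∑ k ∈ (B j).erase j, (P {ω | I j ω = 1 ∧ I k ω = 1}).toReal + b3 j := by
            have hms : ∑ k ∈ B j, p j * p k = p j * ∑ k ∈ B j, p k := by
              rw [Finset.mul_sum]
            rw [hms]
            ring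
    -- assemble
    rw [hdiff, integral_congr_ae (ae_of_all _ hsplit), integral_finset_sum _ fun j _ => hFjint j]
    have hsum_b3 : 0 ≤ ∑ j, b3 j := Finset.sum_nonneg fun j _ => hb3nonneg j
    calc |∑ j, ∫ ω, (p j * f (W ω + 1) - X j ω * f (W ω)) ∂P|
        ≤ ∑ j, |∫ ω, (p j * f (W ω + 1) - X j ω * f (W ω)) ∂P| :=
          Finset.abs_sum_le_sum_abs _ _
      _ ≤ ∑ j, (2 * ∑ k ∈ B j, p j * p k
            + 2 * ∑ k ∈ (B j).erase j, (P {ω | I j ω = 1 ∧ I k ω = 1}).toReal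
            + b3 j) := Finset.sum_le_sum fun j _ => hEj j
      _ = 2 * (∑ j, ∑ k ∈ B j, p j * p k)
            + 2 * (∑ j, ∑ k ∈ (B j).erase j, (P {ω | I j ω = 1 ∧ I k ω = 1}).toReal)
            + ∑ j, b3 j := by
          rw [Finset.sum_add_distrib, Finset.sum_add_distrib, ← Finset.mul_sum, ← Finset.mul_sum]
      _ ≤ 2 * ((∑ j, ∑ k ∈ B j, p j * p k)
            + (∑ j, ∑ k ∈ (B j).erase j, (P {ω | I j ω = 1 ∧ I k ω = 1}).toReal)
            + ∑ j, b3 j) := by linarith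



end
end

section
/- Let f : ℝ^d → [0,∞) be a probability density and suppose there exists r > 0 such that ∫ ‖x‖^{d+r} f(x) dx < ∞. Then for every θ ∈ (0, (d+r)/(2d+r)), the integral ∫_{ℝ^d} f(x)^{1−θ} dx is finite. -/
open MeasureTheory Real Set
open scoped ENNReal

noncomputable section

/-- **Finite moments imply integrability of `f^{1−θ}`**: if `∫ ‖x‖^{d+r} f(x) dx < ∞` for
some `r > 0`, then `∫ f(x)^{1−θ} dx < ∞` for every `θ ∈ (0, (d+r)/(2d+r))`. -/
theorem density_power_integrable
    {d : ℕ} (hd : 0 < d) (f : EuclideanSpace ℝ (Fin d) → ℝ)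
    (hf0 : ∀ x, 0 ≤ f x) (hfmeas : Measurable f) (hfprob : ∫ x, f x = 1)
    (r : ℝ) (hr : 0 < r)
    (hmom : Integrable (fun x : EuclideanSpace ℝ (Fin d) => ‖x‖ ^ ((d : ℝ) + r) * f x)) :
    ∀ θ ∈ Set.Ioo (0 : ℝ) (((d : ℝ) + r) / (2 * d + r)),
      Integrable (fun x : EuclideanSpace ℝ (Fin d) => f x ^ (1 - θ)) := by
  intro θ hθ
  obtain ⟨hθ0, hθ1⟩ := hθ
  have hd0 : (0:ℝ) < (d:ℝ) := by exact_mod_cast hd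
  have hdr : (0:ℝ) < (d:ℝ) + r := by positivity
  have h2dr : (0:ℝ) < 2 * (d:ℝ) + r := by positivity
  have hθ1' : θ * (2 * d + r) < (d:ℝ) + r := (lt_div_iff₀ h2dr).mp hθ1
  have hθlt1 : θ < 1 := by nlinarith
  set s : ℝ := ((d:ℝ) + r) * ((1 - θ) / θ) with hsdef
  have hsd : (d:ℝ) < s := by
    rw [hsdef, ← mul_div_assoc, lt_div_iff₀ hθ0]
    nlinarith
  -- f is integrable
  have hfint : Integrable f := by
    by_contra h
    rw [integral_undef h] at hfprob
    norm_num at hfprob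
  -- the decay function is integrable
  have hdec : Integrable (fun x : EuclideanSpace ℝ (Fin d) => (1 + ‖x‖) ^ (-s)) := by
    apply integrable_one_add_norm
    simpa using hsd
  -- f * (1+‖x‖)^(d+r) is integrable
  have key : ∀ t : ℝ, 0 ≤ t →
      (1 + t) ^ ((d:ℝ) + r) ≤ 2 ^ ((d:ℝ) + r) * (1 + t ^ ((d:ℝ) + r)) := by
    intro t ht
    have h1 : (1 + t) ≤ 2 * max 1 t := by
      rcases le_total t 1 with h | h
      · simp [max_eq_left h]; linarith
      · simp [max_eq_right h]; linarith
    calc (1 + t) ^ ((d:ℝ) + r) ≤ (2 * max 1 t) ^ ((d:ℝ) + r) :=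
          rpow_le_rpow (by positivity) h1 hdr.le
      _ = 2 ^ ((d:ℝ) + r) * (max 1 t) ^ ((d:ℝ) + r) :=
          mul_rpow (by norm_num) (le_max_of_le_left zero_le_one)
      _ ≤ 2 ^ ((d:ℝ) + r) * (1 + t ^ ((d:ℝ) + r)) := by
          have : (max 1 t) ^ ((d:ℝ) + r) ≤ 1 + t ^ ((d:ℝ) + r) := by
            rcases le_total t 1 with h | h
            · rw [max_eq_left h, one_rpow]
              have : (0:ℝ) ≤ t ^ ((d:ℝ) + r) := rpow_nonneg ht _
              linarith
            · rw [max_eq_right h]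
              have : (0:ℝ) ≤ (1:ℝ) := zero_le_one
              linarith [rpow_nonneg ht ((d:ℝ)+r), le_refl (t ^ ((d:ℝ)+r))]
          have h2 : (0:ℝ) ≤ 2 ^ ((d:ℝ) + r) := rpow_nonneg (by norm_num) _
          exact mul_le_mul_of_nonneg_left this h2
  have hmg : Integrable (fun x : EuclideanSpace ℝ (Fin d) =>
      f x * (1 + ‖x‖) ^ ((d:ℝ) + r)) := by
    have hint : Integrable (fun x : EuclideanSpace ℝ (Fin d) =>
        2 ^ ((d:ℝ) + r) * f x + 2 ^ ((d:ℝ) + r) * (‖x‖ ^ ((d:ℝ) + r) * f x)) :=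
      (hfint.const_mul _).add (hmom.const_mul _)
    refine hint.mono' ?_ ?_
    · exact (by fun_prop : Measurable fun x : EuclideanSpace ℝ (Fin d) => f x * (1 + ‖x‖) ^ ((d:ℝ) + r)).aestronglyMeasurable
    · filter_upwards with x
      have hfx := hf0 x
      have hnx : (0:ℝ) ≤ ‖x‖ := norm_nonneg x
      have hb := key ‖x‖ hnx
      rw [Real.norm_eq_abs, abs_of_nonneg (by positivity)]
      calc f x * (1 + ‖x‖) ^ ((d:ℝ) + r)
          ≤ f x * (2 ^ ((d:ℝ) + r) * (1 + ‖x‖ ^ ((d:ℝ) + r))) := by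
            apply mul_le_mul_of_nonneg_left hb hfx
        _ = 2 ^ ((d:ℝ) + r) * f x + 2 ^ ((d:ℝ) + r) * (‖x‖ ^ ((d:ℝ) + r) * f x) := by ring
  -- main bound
  refine (hmg.add hdec).mono' ?_ ?_
  · exact (by fun_prop : Measurable fun x : EuclideanSpace ℝ (Fin d) => f x ^ (1 - θ)).aestronglyMeasurable
  · filter_upwards with x
    simp only [Pi.add_apply]
    set a := f x with ha
    set t := 1 + ‖x‖ with ht
    have ht1 : (1:ℝ) ≤ t := by simp [ht, norm_nonneg]
    have ht0 : (0:ℝ) < t := lt_of_lt_of_le one_pos ht1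
    set g := t ^ ((d:ℝ) + r) with hg
    have hg1 : (1:ℝ) ≤ g := one_le_rpow ht1 hdr.le
    have hg0 : (0:ℝ) < g := lt_of_lt_of_le one_pos hg1
    have hax : (0:ℝ) ≤ a := hf0 x
    have hθne : θ ≠ 0 := ne_of_gt hθ0
    have hgs : g ^ (-((1 - θ) / θ)) = t ^ (-s) := by
      rw [hg, ← Real.rpow_mul ht0.le]
      congr 1
      rw [hsdef]; ring
    have hnorm : ‖a ^ (1 - θ)‖ = a ^ (1 - θ) := by
      rw [Real.norm_eq_abs, abs_of_nonneg (rpow_nonneg hax _)]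
    rw [hnorm]
    by_cases h : 1 ≤ a ^ θ * g
    · have ha0 : 0 < a := by
        by_contra hle
        push_neg at hle
        have : a = 0 := le_antisymm hle hax
        rw [this, Real.zero_rpow hθne, zero_mul] at h
        linarith
      have h1 : a ^ (1 - θ) ≤ a * g := by
        calc a ^ (1 - θ) = a ^ (1 - θ) * 1 := by ring
          _ ≤ a ^ (1 - θ) * (a ^ θ * g) :=
              mul_le_mul_of_nonneg_left h (rpow_nonneg hax _)
          _ = (a ^ (1 - θ) * a ^ θ) * g := by ring
          _ = a * g := by rw [← Real.rpow_add ha0]; norm_num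
      have h2 : (0:ℝ) ≤ t ^ (-s) := rpow_nonneg ht0.le _
      linarith
    · push_neg at h
      have hle : a ^ θ ≤ g⁻¹ := by
        rw [← one_div]
        exact le_of_lt ((lt_div_iff₀ hg0).mpr h)
      have h1 : a ^ (1 - θ) ≤ t ^ (-s) := by
        have e1 : (a ^ θ) ^ ((1 - θ) / θ) = a ^ (1 - θ) := by
          rw [← Real.rpow_mul hax]
          congr 1
          field_simp
        calc a ^ (1 - θ) = (a ^ θ) ^ ((1 - θ) / θ) := e1.symm
          _ ≤ (g⁻¹) ^ ((1 - θ) / θ) :=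
              rpow_le_rpow (rpow_nonneg hax _) hle (div_nonneg (by linarith) hθ0.le)
          _ = g ^ (-((1 - θ) / θ)) := by
              rw [← Real.rpow_neg_one g, ← Real.rpow_mul hg0.le]
              congr 1; ring
          _ = t ^ (-s) := hgs
      have h2 : (0:ℝ) ≤ a * g := mul_nonneg hax hg0.le
      linarith
end
end

section
/- Let f : ℝ^d → [0,∞) be a probability density satisfying ∫ ‖x‖^{d+r} f(x) dx < ∞ for some r > 0, let X' be a random vector with density f, and set g(x) = 1 + E‖X' − x‖^d. Then for every θ ∈ (0, (d+r)/(2d+r)), the integral ∫_{ℝ^d} log(2 g(x)) f(x)^{1−θ} dx is finite. -/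
open MeasureTheory Real Set
open scoped ENNReal

set_option maxHeartbeats 1000000

noncomputable section

/-- `g(x) = 1 + E‖X' − x‖^d` for `X' ∼ f`. -/
def gMom {d : ℕ} (f : EuclideanSpace ℝ (Fin d) → ℝ) (x : EuclideanSpace ℝ (Fin d)) : ℝ :=
  1 + ∫ y, ‖y - x‖ ^ (d : ℕ) * f y

/-- `log u ≤ u^δ/δ` for `u ≥ 1`, `δ > 0`. -/
lemma aux_log_le_rpow_div {u δ : ℝ} (hu : 1 ≤ u) (hδ : 0 < δ) :
    Real.log u ≤ u ^ δ / δ := by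
  have h0 : 0 < u := lt_of_lt_of_le one_pos hu
  rw [le_div_iff₀ hδ]
  calc Real.log u * δ = Real.log (u ^ δ) := by rw [Real.log_rpow h0]; ring
    _ ≤ u ^ δ - 1 := Real.log_le_sub_one_of_pos (Real.rpow_pos_of_pos h0 δ)
    _ ≤ u ^ δ := by linarith

lemma aux_add_pow_le {a b : ℝ} (ha : 0 ≤ a) (hb : 0 ≤ b) (d : ℕ) :
    (a + b) ^ d ≤ 2 ^ d * (a ^ d + b ^ d) := by
  have h1 : a + b ≤ 2 * max a b := by
    rcases le_total a b with h | h
    · rw [max_eq_right h]; linarith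
    · rw [max_eq_left h]; linarith
  calc (a + b) ^ d ≤ (2 * max a b) ^ d := pow_le_pow_left₀ (by positivity) h1 d
    _ = 2 ^ d * (max a b) ^ d := mul_pow 2 _ d
    _ ≤ 2 ^ d * (a ^ d + b ^ d) := by
        refine mul_le_mul_of_nonneg_left ?_ (by positivity)
        rcases le_total a b with h | h
        · rw [max_eq_right h]; nlinarith [pow_nonneg ha d]
        · rw [max_eq_left h]; nlinarith [pow_nonneg hb d]

/-- **Integrability of `log(2g) f^{1−θ}`**: if `∫ ‖x‖^{d+r} f(x) dx < ∞` for some `r > 0`,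
then `∫ log(2 g(x)) f(x)^{1−θ} dx < ∞` for every `θ ∈ (0, (d+r)/(2d+r))`. -/
theorem log_g_density_power_integrable
    {d : ℕ} (hd : 0 < d) (f : EuclideanSpace ℝ (Fin d) → ℝ)
    (hf0 : ∀ x, 0 ≤ f x) (hfmeas : Measurable f) (hfprob : ∫ x, f x = 1)
    (r : ℝ) (hr : 0 < r)
    (hmom : Integrable (fun x : EuclideanSpace ℝ (Fin d) => ‖x‖ ^ ((d : ℝ) + r) * f x)) :
    ∀ θ ∈ Set.Ioo (0 : ℝ) (((d : ℝ) + r) / (2 * d + r)),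
      Integrable (fun x : EuclideanSpace ℝ (Fin d) =>
        Real.log (2 * gMom f x) * f x ^ (1 - θ)) := by
  intro θ hθ
  obtain ⟨hθ0, hθub⟩ := hθ
  have hd1 : (1 : ℝ) ≤ (d : ℝ) := by exact_mod_cast hd
  have hden : (0 : ℝ) < 2 * d + r := by linarith
  have hθ1 : θ < 1 := lt_of_lt_of_le hθub (by rw [div_le_one hden]; linarith)
  have h1θ : 0 < 1 - θ := by linarith
  have hkey : θ * (2 * d + r) < (d : ℝ) + r := (lt_div_iff₀ hden).mp hθub
  -- choice of the auxiliary exponent `s`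
  set s : ℝ := ((d : ℝ) / (1 - θ) + ((d : ℝ) + r) / θ) / 2 with hs_def
  clear_value s
  have hdiv : (d : ℝ) / (1 - θ) < ((d : ℝ) + r) / θ := by
    rw [div_lt_div_iff₀ h1θ hθ0]; nlinarith
  have hs_lb : (d : ℝ) / (1 - θ) < s := by rw [hs_def]; linarith
  have hs_ub : s < ((d : ℝ) + r) / θ := by rw [hs_def]; linarith
  have hs1 : (d : ℝ) < s * (1 - θ) := by
    have := mul_lt_mul_of_pos_right hs_lb h1θ
    rwa [div_mul_cancel₀ _ (ne_of_gt h1θ)] at this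
  have hs2 : s * θ < (d : ℝ) + r := by
    have := mul_lt_mul_of_pos_right hs_ub hθ0
    rwa [div_mul_cancel₀ _ (ne_of_gt hθ0)] at this
  have hs0 : 0 < s := by
    have : (0 : ℝ) < (d : ℝ) / (1 - θ) := by positivity
    linarith
  set δ : ℝ := (d : ℝ) + r - s * θ with hδ_def
  clear_value δ
  have hδ : 0 < δ := by simp only [hδ_def]; linarith
  set p : ℝ := (s * (1 - θ) + d) / 2 with hp_def
  clear_value p
  have hp1 : (d : ℝ) < p := by rw [hp_def]; linarith
  set δ' : ℝ := s * (1 - θ) - p with hδ'_def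
  clear_value δ'
  have hδ' : 0 < δ' := by simp only [hδ'_def, hp_def]; linarith
  -- basic integrability facts
  have hfint : Integrable f := by
    by_contra h
    rw [integral_undef h] at hfprob; norm_num at hfprob
  have hmeas_nd : Measurable fun x : EuclideanSpace ℝ (Fin d) => ‖x‖ ^ (d : ℕ) * f x :=
    (measurable_norm.pow_const d).mul hfmeas
  have hint_nd : Integrable (fun x : EuclideanSpace ℝ (Fin d) => ‖x‖ ^ (d : ℕ) * f x) := by
    refine (hfint.add hmom).mono' hmeas_nd.aestronglyMeasurable (ae_of_all _ fun x => ?_)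
    have hx : (0 : ℝ) ≤ ‖x‖ := norm_nonneg x
    have hb : ‖x‖ ^ (d : ℕ) ≤ 1 + ‖x‖ ^ ((d : ℝ) + r) := by
      rcases le_total ‖x‖ 1 with h | h
      · have h1 : ‖x‖ ^ (d : ℕ) ≤ 1 := pow_le_one₀ hx h
        have h2 := Real.rpow_nonneg hx ((d : ℝ) + r)
        linarith
      · have h1 : ‖x‖ ^ (d : ℕ) = ‖x‖ ^ ((d : ℕ) : ℝ) := (Real.rpow_natCast _ d).symm
        have h2 : ‖x‖ ^ ((d : ℕ) : ℝ) ≤ ‖x‖ ^ ((d : ℝ) + r) :=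
          Real.rpow_le_rpow_of_exponent_le h (by linarith)
        have h3 := Real.rpow_nonneg hx ((d : ℝ) + r)
        rw [h1]; linarith
    rw [Real.norm_of_nonneg (mul_nonneg (pow_nonneg (norm_nonneg _) _) (hf0 x))]
    calc ‖x‖ ^ (d : ℕ) * f x ≤ (1 + ‖x‖ ^ ((d : ℝ) + r)) * f x :=
          mul_le_mul_of_nonneg_right hb (hf0 x)
      _ = f x + ‖x‖ ^ ((d : ℝ) + r) * f x := by ring
  set Md : ℝ := ∫ y, ‖y‖ ^ (d : ℕ) * f y with hMd_def
  clear_value Md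
  have hMd0 : 0 ≤ Md := by
    rw [hMd_def]
    exact integral_nonneg fun y => mul_nonneg (pow_nonneg (norm_nonneg _) _) (hf0 y)
  -- integrability of the inner integrand
  have hinner_int : ∀ x : EuclideanSpace ℝ (Fin d),
      Integrable (fun y => ‖y - x‖ ^ (d : ℕ) * f y) := by
    intro x
    refine ((hint_nd.const_mul ((2:ℝ) ^ d)).add (hfint.const_mul ((2:ℝ) ^ d * ‖x‖ ^ (d : ℕ)))).mono'
      ((((continuous_id.sub continuous_const).norm.pow d).measurable).mul hfmeas).aestronglyMeasurable
      (ae_of_all _ fun y => ?_)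
    have h1 : ‖y - x‖ ^ (d : ℕ) ≤ 2 ^ d * (‖y‖ ^ d + ‖x‖ ^ d) :=
      le_trans (pow_le_pow_left₀ (norm_nonneg _) (norm_sub_le y x) d)
        (aux_add_pow_le (norm_nonneg y) (norm_nonneg x) d)
    rw [Real.norm_of_nonneg (mul_nonneg (pow_nonneg (norm_nonneg _) _) (hf0 y))]
    calc ‖y - x‖ ^ (d : ℕ) * f y ≤ (2 ^ d * (‖y‖ ^ d + ‖x‖ ^ d)) * f y :=
          mul_le_mul_of_nonneg_right h1 (hf0 y)
      _ = 2 ^ d * (‖y‖ ^ d * f y) + (2 ^ d * ‖x‖ ^ d) * f y := by ring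
  -- the upper bound on g
  set A : ℝ := 1 + 2 ^ d * Md + 2 ^ d with hA_def
  clear_value A
  have hA1 : (1 : ℝ) ≤ A := by
    have e1 : (0:ℝ) ≤ 2 ^ d * Md := by positivity
    have e2 : (0:ℝ) < 2 ^ d := by positivity
    simp only [hA_def]; linarith
  have hg_lb : ∀ x, 1 ≤ gMom f x := by
    intro x
    have : 0 ≤ ∫ y, ‖y - x‖ ^ (d : ℕ) * f y := integral_nonneg fun y => mul_nonneg (pow_nonneg (norm_nonneg _) _) (hf0 y)
    simp only [gMom]; linarith
  have hg_ub : ∀ x, gMom f x ≤ A * (1 + ‖x‖) ^ (d : ℕ) := by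
    intro x
    have hle : ∫ y, ‖y - x‖ ^ (d : ℕ) * f y ≤ 2 ^ d * Md + 2 ^ d * ‖x‖ ^ (d : ℕ) := by
      have heq : ∫ y, (2 ^ d * (‖y‖ ^ (d:ℕ) * f y) + (2 ^ d * ‖x‖ ^ (d:ℕ)) * f y)
          = 2 ^ d * Md + 2 ^ d * ‖x‖ ^ (d : ℕ) := by
        rw [integral_add (hint_nd.const_mul _) (hfint.const_mul _),
          integral_const_mul, integral_const_mul, hfprob, ← hMd_def]
        ring
      rw [← heq]
      refine integral_mono (hinner_int x)
        ((hint_nd.const_mul _).add (hfint.const_mul _)) fun y => ?_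
      have h1 : ‖y - x‖ ^ (d : ℕ) ≤ 2 ^ d * (‖y‖ ^ d + ‖x‖ ^ d) :=
        le_trans (pow_le_pow_left₀ (norm_nonneg _) (norm_sub_le y x) d)
          (aux_add_pow_le (norm_nonneg y) (norm_nonneg x) d)
      calc ‖y - x‖ ^ (d : ℕ) * f y ≤ (2 ^ d * (‖y‖ ^ d + ‖x‖ ^ d)) * f y :=
            mul_le_mul_of_nonneg_right h1 (hf0 y)
        _ = 2 ^ d * (‖y‖ ^ d * f y) + (2 ^ d * ‖x‖ ^ d) * f y := by ring
    have hx : (0 : ℝ) ≤ ‖x‖ := norm_nonneg x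
    have h1 : (1 : ℝ) ≤ (1 + ‖x‖) ^ (d : ℕ) := one_le_pow₀ (by linarith)
    have h2 : ‖x‖ ^ (d : ℕ) ≤ (1 + ‖x‖) ^ (d : ℕ) := pow_le_pow_left₀ hx (by linarith) d
    have h2p : (0:ℝ) < 2 ^ d := by positivity
    have e1 : (0:ℝ) ≤ (1 + 2 ^ d * Md) * ((1 + ‖x‖) ^ (d : ℕ) - 1) :=
      mul_nonneg (by positivity) (by linarith)
    have e2 : (0:ℝ) ≤ (2:ℝ) ^ d * ((1 + ‖x‖) ^ (d : ℕ) - ‖x‖ ^ (d : ℕ)) :=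
      mul_nonneg (by positivity) (by linarith)
    simp only [gMom, hA_def]
    nlinarith [hle, e1, e2]
  -- measurability of g
  have hgmeas : Measurable (gMom f) := by
    have hSM : StronglyMeasurable fun q : (EuclideanSpace ℝ (Fin d)) × (EuclideanSpace ℝ (Fin d)) =>
        ‖q.2 - q.1‖ ^ (d : ℕ) * f q.2 :=
      ((((continuous_snd.sub continuous_fst).norm.pow d).measurable).mul
        (hfmeas.comp measurable_snd)).stronglyMeasurable
    have hI := hSM.integral_prod_right' (ν := (volume : Measure (EuclideanSpace ℝ (Fin d))))
    exact measurable_const.add hI.measurable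
  -- log bound
  have hA0 : (0 : ℝ) < A := lt_of_lt_of_le one_pos hA1
  have hlogA : 0 ≤ Real.log (2 * A) := Real.log_nonneg (by linarith)
  have hlog_ub : ∀ x, Real.log (2 * gMom f x)
      ≤ Real.log (2 * A) + (d : ℝ) * Real.log (1 + ‖x‖) := by
    intro x
    have hg1 := hg_lb x
    have h2g : (0 : ℝ) < 2 * gMom f x := by linarith
    have hx : (0 : ℝ) ≤ ‖x‖ := norm_nonneg x
    have hstep : Real.log (2 * gMom f x) ≤ Real.log (2 * A * (1 + ‖x‖) ^ (d : ℕ)) := by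
      refine Real.log_le_log h2g ?_
      have := hg_ub x
      calc 2 * gMom f x ≤ 2 * (A * (1 + ‖x‖) ^ (d : ℕ)) := by linarith
        _ = 2 * A * (1 + ‖x‖) ^ (d : ℕ) := by ring
    have heq : Real.log (2 * A * (1 + ‖x‖) ^ (d : ℕ))
        = Real.log (2 * A) + (d : ℝ) * Real.log (1 + ‖x‖) := by
      rw [Real.log_mul (by positivity) (by positivity), Real.log_pow]
    rw [heq] at hstep; exact hstep
  -- constants and dominating function
  set C1 : ℝ := Real.log (2 * A) + (d : ℝ) * (1 / δ) with hC1_def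
  clear_value C1
  set C2 : ℝ := Real.log (2 * A) + (d : ℝ) * (1 / δ') with hC2_def
  clear_value C2
  have hC1_0 : 0 ≤ C1 := by simp only [hC1_def]; positivity
  have hC2_0 : 0 ≤ C2 := by simp only [hC2_def]; positivity
  -- integrability of dominating function
  have hmeas_pow : Measurable fun x : EuclideanSpace ℝ (Fin d) =>
      (1 + ‖x‖) ^ ((d : ℝ) + r) := by
    exact (Real.continuous_rpow_const (by linarith)).measurable.comp
      (continuous_const.add continuous_norm).measurable
  have hint1 : Integrable (fun x : EuclideanSpace ℝ (Fin d) =>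
      (1 + ‖x‖) ^ ((d : ℝ) + r) * f x) := by
    refine ((hfint.const_mul ((2:ℝ) ^ ((d:ℝ)+r))).add
      (hmom.const_mul ((2:ℝ) ^ ((d:ℝ)+r)))).mono'
      (hmeas_pow.mul hfmeas).aestronglyMeasurable (ae_of_all _ fun x => ?_)
    have hx : (0 : ℝ) ≤ ‖x‖ := norm_nonneg x
    have hq0 : (0:ℝ) ≤ (d : ℝ) + r := by linarith
    have hb : (1 + ‖x‖) ^ ((d : ℝ) + r)
        ≤ 2 ^ ((d:ℝ)+r) * (1 + ‖x‖ ^ ((d:ℝ)+r)) := by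
      rcases le_total ‖x‖ 1 with h | h
      · have h1 : (1 + ‖x‖ : ℝ) ≤ 2 := by linarith
        have h2 : (1 + ‖x‖ : ℝ) ^ ((d:ℝ)+r) ≤ 2 ^ ((d:ℝ)+r) :=
          Real.rpow_le_rpow (by linarith) h1 hq0
        have h3 : (0:ℝ) ≤ ‖x‖ ^ ((d:ℝ)+r) := Real.rpow_nonneg hx _
        have h4 : (0:ℝ) < (2:ℝ) ^ ((d:ℝ)+r) := Real.rpow_pos_of_pos two_pos _
        nlinarith
      · have h1 : (1 + ‖x‖ : ℝ) ≤ 2 * ‖x‖ := by linarith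
        have h2 : (1 + ‖x‖ : ℝ) ^ ((d:ℝ)+r) ≤ (2 * ‖x‖) ^ ((d:ℝ)+r) :=
          Real.rpow_le_rpow (by linarith) h1 hq0
        rw [Real.mul_rpow (by norm_num) hx] at h2
        have h4 : (0:ℝ) < (2:ℝ) ^ ((d:ℝ)+r) := Real.rpow_pos_of_pos two_pos _
        nlinarith
    rw [Real.norm_of_nonneg (mul_nonneg (Real.rpow_nonneg (by positivity) _) (hf0 x))]
    calc (1 + ‖x‖) ^ ((d : ℝ) + r) * f x
        ≤ (2 ^ ((d:ℝ)+r) * (1 + ‖x‖ ^ ((d:ℝ)+r))) * f x :=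
          mul_le_mul_of_nonneg_right hb (hf0 x)
      _ = 2 ^ ((d:ℝ)+r) * f x + 2 ^ ((d:ℝ)+r) * (‖x‖ ^ ((d:ℝ)+r) * f x) := by ring
  have hfinrank : (Module.finrank ℝ (EuclideanSpace ℝ (Fin d)) : ℝ) < p := by
    rw [finrank_euclideanSpace_fin]; exact hp1
  have hint2 : Integrable (fun x : EuclideanSpace ℝ (Fin d) => (1 + ‖x‖) ^ (-p)) :=
    integrable_one_add_norm hfinrank
  have hΦint : Integrable (fun x : EuclideanSpace ℝ (Fin d) =>
      C1 * ((1 + ‖x‖) ^ ((d : ℝ) + r) * f x) + C2 * (1 + ‖x‖) ^ (-p)) :=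
    (hint1.const_mul C1).add (hint2.const_mul C2)
  -- measurability of the target
  have htarget_meas : AEStronglyMeasurable (fun x : EuclideanSpace ℝ (Fin d) =>
      Real.log (2 * gMom f x) * f x ^ (1 - θ)) volume := by
    exact (((measurable_const.mul hgmeas).log).mul
      ((Real.continuous_rpow_const (le_of_lt h1θ)).measurable.comp hfmeas)).aestronglyMeasurable
  -- the pointwise bound
  refine hΦint.mono' htarget_meas (ae_of_all _ fun x => ?_)
  set t : ℝ := 1 + ‖x‖ with ht_def
  clear_value t
  have ht1 : (1 : ℝ) ≤ t := by simp only [ht_def]; linarith [norm_nonneg x]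
  have ht0 : (0 : ℝ) < t := lt_of_lt_of_le one_pos ht1
  have hg1 := hg_lb x
  have hflog0 : 0 ≤ Real.log (2 * gMom f x) := Real.log_nonneg (by linarith)
  have hfpow0 : 0 ≤ f x ^ (1 - θ) := Real.rpow_nonneg (hf0 x) _
  rw [Real.norm_of_nonneg (mul_nonneg hflog0 hfpow0)]
  set L : ℝ := Real.log (2 * A) + (d : ℝ) * Real.log t with hL_def
  clear_value L
  have hlogt0 : 0 ≤ Real.log t := Real.log_nonneg ht1
  have hL0 : 0 ≤ L := by simp only [hL_def]; positivity
  have hL_ub : Real.log (2 * gMom f x) ≤ L := by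
    rw [hL_def, ht_def]; exact hlog_ub x
  -- bounds on L by powers of t
  have hL_pow : ∀ e : ℝ, 0 < e → L ≤ (Real.log (2 * A) + (d : ℝ) * (1 / e)) * t ^ e := by
    intro e he
    have h1 : (1 : ℝ) ≤ t ^ e := Real.one_le_rpow ht1 (le_of_lt he)
    have h2 : Real.log t ≤ t ^ e / e := aux_log_le_rpow_div ht1 he
    have h3 : (d : ℝ) * Real.log t ≤ (d : ℝ) * (t ^ e / e) :=
      mul_le_mul_of_nonneg_left h2 (by positivity)
    have h4 : Real.log (2 * A) * 1 ≤ Real.log (2 * A) * t ^ e :=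
      mul_le_mul_of_nonneg_left h1 hlogA
    simp only [hL_def]
    calc Real.log (2 * A) + (d : ℝ) * Real.log t
        ≤ Real.log (2 * A) * t ^ e + (d : ℝ) * (t ^ e / e) := by linarith
      _ = (Real.log (2 * A) + (d : ℝ) * (1 / e)) * t ^ e := by ring
  -- bound on f^{1-θ}
  have hfpow_ub : f x ^ (1 - θ) ≤ f x * t ^ (s * θ) + t ^ (-(s * (1 - θ))) := by
    have hts : (0:ℝ) < t ^ (-s) := Real.rpow_pos_of_pos ht0 _
    rcases le_or_gt (f x) (t ^ (-s)) with h | h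
    · have h1 : f x ^ (1 - θ) ≤ (t ^ (-s)) ^ (1 - θ) :=
        Real.rpow_le_rpow (hf0 x) h (le_of_lt h1θ)
      have h2 : (t ^ (-s)) ^ (1 - θ) = t ^ (-(s * (1 - θ))) := by
        rw [← Real.rpow_mul (le_of_lt ht0)]
        congr 1
        ring
      have h3 : 0 ≤ f x * t ^ (s * θ) :=
        mul_nonneg (hf0 x) (le_of_lt (Real.rpow_pos_of_pos ht0 _))
      rw [h2] at h1
      linarith
    · have hfpos : 0 < f x := lt_trans hts h
      have h1 : f x ^ (1 - θ) = f x * f x ^ (-θ) := by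
        rw [show (1 - θ) = 1 + (-θ) by ring, Real.rpow_add hfpos, Real.rpow_one]
      have h2 : f x ^ (-θ) ≤ (t ^ (-s)) ^ (-θ) :=
        Real.rpow_le_rpow_of_nonpos hts (le_of_lt h) (by linarith)
      have h3 : (t ^ (-s)) ^ (-θ) = t ^ (s * θ) := by
        rw [← Real.rpow_mul (le_of_lt ht0)]; ring_nf
      have h4 : f x * f x ^ (-θ) ≤ f x * t ^ (s * θ) := by
        rw [← h3]; exact mul_le_mul_of_nonneg_left h2 (hf0 x)
      have h5 : (0:ℝ) ≤ t ^ (-(s * (1 - θ))) := le_of_lt (Real.rpow_pos_of_pos ht0 _)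
      rw [h1]; linarith
  -- assemble
  have step1 : Real.log (2 * gMom f x) * f x ^ (1 - θ)
      ≤ L * (f x * t ^ (s * θ)) + L * t ^ (-(s * (1 - θ))) := by
    calc Real.log (2 * gMom f x) * f x ^ (1 - θ) ≤ L * f x ^ (1 - θ) :=
          mul_le_mul_of_nonneg_right hL_ub hfpow0
      _ ≤ L * (f x * t ^ (s * θ) + t ^ (-(s * (1 - θ)))) :=
          mul_le_mul_of_nonneg_left hfpow_ub hL0
      _ = L * (f x * t ^ (s * θ)) + L * t ^ (-(s * (1 - θ))) := by ring
  have step2 : L * (f x * t ^ (s * θ)) ≤ C1 * (t ^ ((d : ℝ) + r) * f x) := by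
    have h1 : L * (f x * t ^ (s * θ)) ≤ (C1 * t ^ δ) * (f x * t ^ (s * θ)) :=
      mul_le_mul_of_nonneg_right (hC1_def ▸ hL_pow δ hδ)
        (mul_nonneg (hf0 x) (le_of_lt (Real.rpow_pos_of_pos ht0 _)))
    have h2 : (C1 * t ^ δ) * (f x * t ^ (s * θ)) = C1 * (t ^ (δ + s * θ) * f x) := by
      rw [Real.rpow_add ht0]; ring
    have h3 : δ + s * θ = (d : ℝ) + r := by simp only [hδ_def]; ring
    rw [h2, h3] at h1; exact h1
  have step3 : L * t ^ (-(s * (1 - θ))) ≤ C2 * t ^ (-p) := by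
    have h1 : L * t ^ (-(s * (1 - θ))) ≤ (C2 * t ^ δ') * t ^ (-(s * (1 - θ))) :=
      mul_le_mul_of_nonneg_right (hC2_def ▸ hL_pow δ' hδ')
        (le_of_lt (Real.rpow_pos_of_pos ht0 _))
    have h2 : (C2 * t ^ δ') * t ^ (-(s * (1 - θ))) = C2 * t ^ (δ' + -(s * (1 - θ))) := by
      rw [Real.rpow_add ht0]; ring
    have h3 : δ' + -(s * (1 - θ)) = -p := by simp only [hδ'_def]; ring
    rw [h2, h3] at h1; exact h1
  calc Real.log (2 * gMom f x) * f x ^ (1 - θ)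
      ≤ L * (f x * t ^ (s * θ)) + L * t ^ (-(s * (1 - θ))) := step1
    _ ≤ C1 * (t ^ ((d : ℝ) + r) * f x) + C2 * t ^ (-p) := add_le_add step2 step3

end
end

section
/- For all μ_1, μ_2 ≥ 0, the total variation distance between the Poisson distribution with mean μ_1 and the Poisson distribution with mean μ_2 satisfies d_TV(Pois(μ_1), Pois(μ_2)) ≤ |μ_1 − μ_2|. -/
open MeasureTheory ProbabilityTheory
open scoped NNReal

noncomputable section

namespace PoissonTVAux

open Real Set
open scoped Nat

/-- The truncated exponential-type series. -/
def G (A : Set ℕ) (t : ℝ) : ℝ := ∑' n, A.indicator (fun n => t ^ n / n !) n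

/-- Its term-by-term derivative. -/
def G' (A : Set ℕ) (t : ℝ) : ℝ :=
  ∑' n, A.indicator (fun n => (n : ℝ) * t ^ (n - 1) / n !) n

lemma tsum_exp (t : ℝ) : (∑' n : ℕ, t ^ n / n !) = Real.exp t := by
  rw [Real.exp_eq_exp_ℝ, NormedSpace.exp_eq_tsum_div]

lemma shift_eq (t : ℝ) : (fun n : ℕ => ((n + 1 : ℕ) : ℝ) * t ^ ((n + 1) - 1) / (n + 1)!)
    = fun n : ℕ => t ^ n / n ! := by
  funext n
  rw [Nat.factorial_succ, Nat.add_sub_cancel]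
  push_cast
  have h1 : ((n : ℝ) + 1) ≠ 0 := by positivity
  have h2 : ((n ! : ℕ) : ℝ) ≠ 0 := Nat.cast_ne_zero.mpr n.factorial_ne_zero
  field_simp

lemma summable_u (t : ℝ) : Summable fun n : ℕ => (n : ℝ) * t ^ (n - 1) / n ! := by
  apply (summable_nat_add_iff 1).mp
  simpa only [shift_eq t] using Real.summable_pow_div_factorial t

lemma tsum_u (t : ℝ) : (∑' n : ℕ, (n : ℝ) * t ^ (n - 1) / n !) = Real.exp t := by
  rw [Summable.tsum_eq_zero_add (summable_u t)]
  simp only [Nat.cast_zero, zero_mul, zero_div, zero_add]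
  calc (∑' n : ℕ, ((n + 1 : ℕ) : ℝ) * t ^ ((n + 1) - 1) / (n + 1)!)
      = ∑' n : ℕ, t ^ n / n ! := by rw [shift_eq t]
    _ = Real.exp t := tsum_exp t

lemma summable_G (A : Set ℕ) (t : ℝ) :
    Summable fun n => A.indicator (fun n : ℕ => t ^ n / n !) n :=
  (Real.summable_pow_div_factorial t).indicator A

lemma summable_G' (A : Set ℕ) (t : ℝ) :
    Summable fun n => A.indicator (fun n : ℕ => (n : ℝ) * t ^ (n - 1) / n !) n :=
  (summable_u t).indicator A

lemma hasDerivAt_G (A : Set ℕ) {b : ℝ} (hb : 0 ≤ b) {t : ℝ}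
    (ht : t ∈ Ioo (-1 : ℝ) (b + 1)) : HasDerivAt (G A) (G' A t) t := by
  classical
  have key := hasDerivAt_tsum_of_isPreconnected (𝕜 := ℝ) (F := ℝ)
    (u := fun n : ℕ => (n : ℝ) * (b + 1) ^ (n - 1) / n !)
    (g := fun (n : ℕ) (s : ℝ) => A.indicator (fun m : ℕ => s ^ m / m !) n)
    (g' := fun (n : ℕ) (s : ℝ) => A.indicator (fun m : ℕ => (m : ℝ) * s ^ (m - 1) / m !) n)
    (t := Ioo (-1 : ℝ) (b + 1)) (y₀ := 0) (y := t)
    (summable_u (b + 1)) isOpen_Ioo (convex_Ioo _ _).isPreconnected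
    ?_ ?_ ⟨by linarith, by linarith⟩ (summable_G A 0) ht
  · exact key
  · intro n y _
    by_cases hn : n ∈ A
    · simpa [Set.indicator_of_mem hn] using ((hasDerivAt_pow n y).div_const (n ! : ℝ))
    · simpa [Set.indicator_of_notMem hn] using hasDerivAt_const y (0 : ℝ)
  · intro n y hy
    by_cases hn : n ∈ A
    · simp only [Set.indicator_of_mem hn]
      rw [Real.norm_eq_abs, abs_div, abs_mul]
      have h1 : |y ^ (n - 1)| ≤ (b + 1) ^ (n - 1) := by
        rw [abs_pow]
        refine pow_le_pow_left₀ (abs_nonneg _) ?_ _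
        rw [abs_le]
        exact ⟨by nlinarith [hy.1], le_of_lt hy.2⟩
      have h2 : |(n : ℝ)| = (n : ℝ) := abs_of_nonneg (Nat.cast_nonneg n)
      have h3 : |((n ! : ℕ) : ℝ)| = ((n ! : ℕ) : ℝ) := abs_of_nonneg (Nat.cast_nonneg _)
      rw [h2, h3]
      have hfact : (0 : ℝ) < ((n ! : ℕ) : ℝ) := by positivity
      exact div_le_div_of_nonneg_right
        (mul_le_mul_of_nonneg_left h1 (Nat.cast_nonneg n)) hfact.le
    · simp only [Set.indicator_of_notMem hn, norm_zero]
      positivity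

lemma G_nonneg (A : Set ℕ) {t : ℝ} (ht : 0 ≤ t) : 0 ≤ G A t :=
  tsum_nonneg fun n => Set.indicator_nonneg (fun n _ => by positivity) n

lemma G_le_exp (A : Set ℕ) {t : ℝ} (ht : 0 ≤ t) : G A t ≤ Real.exp t := by
  rw [← tsum_exp t]
  exact Summable.tsum_le_tsum (fun n => Set.indicator_le_self' (fun n _ => by positivity) n)
    (summable_G A t) (Real.summable_pow_div_factorial t)

lemma G'_nonneg (A : Set ℕ) {t : ℝ} (ht : 0 ≤ t) : 0 ≤ G' A t :=
  tsum_nonneg fun n => Set.indicator_nonneg (fun n _ => by positivity) n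

lemma G'_le_exp (A : Set ℕ) {t : ℝ} (ht : 0 ≤ t) : G' A t ≤ Real.exp t := by
  rw [← tsum_u t]
  exact Summable.tsum_le_tsum (fun n => Set.indicator_le_self' (fun n _ => by positivity) n)
    (summable_G' A t) (summable_u t)

/-- The probability that a Poisson r.v. with mean `t` lies in `A`, as a function of `t`. -/
def F (A : Set ℕ) (t : ℝ) : ℝ := Real.exp (-t) * G A t

lemma hasDerivAt_F (A : Set ℕ) {b : ℝ} (hb : 0 ≤ b) {t : ℝ}
    (ht : t ∈ Ioo (-1 : ℝ) (b + 1)) :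
    HasDerivAt (F A) (Real.exp (-t) * (G' A t - G A t)) t := by
  have h1 : HasDerivAt (fun t : ℝ => Real.exp (-t)) (-Real.exp (-t)) t := by
    simpa [Function.comp_def] using (Real.hasDerivAt_exp (-t)).comp t (hasDerivAt_neg t)
  have h2 := hasDerivAt_G A hb ht
  have h3 : HasDerivAt (F A) _ t := h1.mul h2
  convert h3 using 1
  ring

lemma abs_F_sub_F_le (A : Set ℕ) {x y b : ℝ} (hb : 0 ≤ b)
    (hx : x ∈ Icc (0 : ℝ) b) (hy : y ∈ Icc (0 : ℝ) b) :
    |F A y - F A x| ≤ |y - x| := by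
  have key : ∀ z ∈ Icc (0 : ℝ) b,
      HasDerivWithinAt (F A) (Real.exp (-z) * (G' A z - G A z)) (Icc 0 b) z := by
    intro z hz
    have hz' : z ∈ Ioo (-1 : ℝ) (b + 1) := ⟨by linarith [hz.1], by linarith [hz.2]⟩
    exact (hasDerivAt_F A hb hz').hasDerivWithinAt
  have bound : ∀ z ∈ Icc (0 : ℝ) b, ‖Real.exp (-z) * (G' A z - G A z)‖ ≤ 1 := by
    intro z hz
    rw [Real.norm_eq_abs, abs_mul, Real.abs_exp]
    have h1 : |G' A z - G A z| ≤ Real.exp z := by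
      rw [abs_sub_le_iff]
      exact ⟨by linarith [G'_le_exp A hz.1, G_nonneg A hz.1],
        by linarith [G_le_exp A hz.1, G'_nonneg A hz.1]⟩
    calc Real.exp (-z) * |G' A z - G A z| ≤ Real.exp (-z) * Real.exp z :=
          mul_le_mul_of_nonneg_left h1 (Real.exp_pos _).le
      _ = 1 := by rw [← Real.exp_add]; simp
  have h := (convex_Icc (0 : ℝ) b).norm_image_sub_le_of_norm_hasDerivWithin_le key bound hx hy
  simpa [Real.norm_eq_abs] using h

lemma measure_toReal (A : Set ℕ) (r : ℝ≥0) :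
    ((poissonMeasure r) A).toReal = F A (r : ℝ) := by
  classical
  have hA : MeasurableSet A := .of_discrete
  have e : poissonMeasure r A = ∑' n, A.indicator (poissonPMF r) n := by
    rw [poissonMeasure, Measure.sum_apply _ hA]
    congr 1; funext n
    rw [Measure.smul_apply, Measure.dirac_apply' _ hA, smul_eq_mul]
    by_cases hn : n ∈ A <;> simp [hn, ← poissonPMFReal_ofReal_eq_poissonPMF, poissonPMFReal]
  rw [e]
  have h1 : ∀ n : ℕ, A.indicator (poissonPMF r) n ≠ ⊤ := by
    intro n
    by_cases hn : n ∈ A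
    · rw [Set.indicator_of_mem hn]; exact PMF.apply_ne_top _ n
    · rw [Set.indicator_of_notMem hn]; exact ENNReal.zero_ne_top
  rw [ENNReal.tsum_toReal_eq h1]
  have h2 : ∀ n : ℕ, (A.indicator (poissonPMF r) n).toReal
      = Real.exp (-(r : ℝ)) * A.indicator (fun n : ℕ => (r : ℝ) ^ n / n !) n := by
    intro n
    by_cases hn : n ∈ A
    · rw [Set.indicator_of_mem hn, Set.indicator_of_mem hn,
        show (poissonPMF r) n = ENNReal.ofReal (poissonPMFReal r n) from rfl,
        ENNReal.toReal_ofReal poissonPMFReal_nonneg, poissonPMFReal, mul_div_assoc]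
    · rw [Set.indicator_of_notMem hn, Set.indicator_of_notMem hn]
      simp
  simp only [h2]
  rw [tsum_mul_left]
  rfl

end PoissonTVAux

/-- **TV distance between Poisson laws**: `d_TV(Pois(μ₁), Pois(μ₂)) ≤ |μ₁ − μ₂|`. -/
theorem poisson_tv_le_abs_sub (μ₁ μ₂ : ℝ≥0) :
    tvDist (poissonMeasure μ₁) (poissonMeasure μ₂) ≤ |(μ₁ : ℝ) - (μ₂ : ℝ)| := by
  refine Real.iSup_le (fun A => ?_) (abs_nonneg _)
  rw [PoissonTVAux.measure_toReal A μ₁, PoissonTVAux.measure_toReal A μ₂]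
  have hb0 : (0 : ℝ) ≤ max (μ₁ : ℝ) (μ₂ : ℝ) :=
    le_trans (μ₁ : ℝ≥0).coe_nonneg (le_max_left _ _)
  exact PoissonTVAux.abs_F_sub_F_le A hb0
    ⟨(μ₂ : ℝ≥0).coe_nonneg, le_max_right _ _⟩
    ⟨(μ₁ : ℝ≥0).coe_nonneg, le_max_left _ _⟩

end
end
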